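/- arXiv:1011.1938 — 6 statements merged into one kernel-verified Lean document; each statement's English description precedes it below -/
import Mathlib

section
/- For 1/2 < λ₁ < λ₂ < g (where g = (√5−1)/2), every sequence i ∈ {0,1}^ℕ that is the unique expansion of its projection Π_{λ₂}(i) in base λ₂ is also the unique expansion of Π_{λ₁}(i) in base λ₁. That is, 𝒰_{λ₂} ⊆ 𝒰_{λ₁}. -/
noncomputable section

/-- A sequence with digits in {0,1}. -/
def binSeq (i : ℕ → ℕ) : Prop := ∀ n, i n ≤ 1

/-- The projection `Π_λ(i) = ∑_{n≥1} i_n λ^n`. -/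
def piL (l : ℝ) (i : ℕ → ℕ) : ℝ := ∑' n : ℕ, (i n : ℝ) * l ^ (n + 1)

/-- `i` belongs to `𝒰_λ`: it is the unique {0,1}-expansion of its projection. -/
def uniqueExpansion (l : ℝ) (i : ℕ → ℕ) : Prop :=
  binSeq i ∧ ∀ j : ℕ → ℕ, binSeq j → piL l j = piL l i → j = i

namespace Stmt0Aux

lemma summable_geom {l : ℝ} (hl0 : 0 ≤ l) (hl1 : l < 1) :
    Summable (fun n : ℕ => l ^ (n + 1)) :=
  ((summable_geometric_of_lt_one hl0 hl1).mul_right l).congr fun n => (pow_succ l n).symm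

lemma tsum_geom {l : ℝ} (hl0 : 0 ≤ l) (hl1 : l < 1) :
    ∑' n : ℕ, l ^ (n + 1) = l / (1 - l) := by
  calc ∑' n : ℕ, l ^ (n + 1) = ∑' n : ℕ, l * l ^ n := by
        refine tsum_congr fun n => ?_; rw [pow_succ, mul_comm]
    _ = l * (1 - l)⁻¹ := by rw [tsum_mul_left, tsum_geometric_of_lt_one hl0 hl1]
    _ = l / (1 - l) := by rw [div_eq_mul_inv]

lemma summable_piL {l : ℝ} (hl0 : 0 ≤ l) (hl1 : l < 1) {i : ℕ → ℕ} (hi : binSeq i) :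
    Summable (fun n => (i n : ℝ) * l ^ (n + 1)) := by
  refine Summable.of_nonneg_of_le (fun n => by positivity) (fun n => ?_) (summable_geom hl0 hl1)
  calc (i n : ℝ) * l ^ (n + 1) ≤ 1 * l ^ (n + 1) := by
        refine mul_le_mul_of_nonneg_right ?_ (by positivity)
        exact_mod_cast hi n
    _ = l ^ (n + 1) := one_mul _

lemma piL_nonneg {l : ℝ} (hl0 : 0 ≤ l) (i : ℕ → ℕ) : 0 ≤ piL l i :=
  tsum_nonneg fun n => by positivity

lemma piL_le {l : ℝ} (hl0 : 0 ≤ l) (hl1 : l < 1) {i : ℕ → ℕ} (hi : binSeq i) :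
    piL l i ≤ l / (1 - l) := by
  rw [← tsum_geom hl0 hl1]
  refine Summable.tsum_le_tsum (fun n => ?_) (summable_piL hl0 hl1 hi) (summable_geom hl0 hl1)
  calc (i n : ℝ) * l ^ (n + 1) ≤ 1 * l ^ (n + 1) := by
        refine mul_le_mul_of_nonneg_right ?_ (by positivity)
        exact_mod_cast hi n
    _ = l ^ (n + 1) := one_mul _

lemma piL_split {l : ℝ} (hl0 : 0 ≤ l) (hl1 : l < 1) {i : ℕ → ℕ} (hi : binSeq i) (N : ℕ) :
    piL l i = (∑ m ∈ Finset.range N, (i m : ℝ) * l ^ (m + 1))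
      + l ^ N * piL l (fun k => i (N + k)) := by
  have h := summable_piL hl0 hl1 hi
  have h2 := Summable.sum_add_tsum_nat_add (f := fun n => (i n : ℝ) * l ^ (n + 1)) N h
  rw [piL, ← h2]
  congr 1
  have e : ∀ k : ℕ, (i (k + N) : ℝ) * l ^ (k + N + 1)
      = l ^ N * ((i (N + k) : ℝ) * l ^ (k + 1)) := by
    intro k
    rw [add_comm N k, show k + N + 1 = N + (k + 1) by omega, pow_add]
    ring
  rw [tsum_congr e, tsum_mul_left]
  rfl

lemma piL_compl {l : ℝ} (hl0 : 0 ≤ l) (hl1 : l < 1) {i : ℕ → ℕ} (hi : binSeq i) :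
    piL l (fun n => 1 - i n) = l / (1 - l) - piL l i := by
  have h := summable_piL hl0 hl1 hi
  have hg := summable_geom hl0 hl1
  have e : ∀ n : ℕ, ((1 - i n : ℕ) : ℝ) * l ^ (n + 1)
      = l ^ (n + 1) - (i n : ℝ) * l ^ (n + 1) := by
    intro n
    rw [Nat.cast_sub (hi n)]
    push_cast
    ring
  rw [piL, tsum_congr e, Summable.tsum_sub hg h, tsum_geom hl0 hl1]
  rfl

lemma piL_mono {l₁ l₂ : ℝ} (h0 : 0 ≤ l₁) (h12 : l₁ ≤ l₂) (h2 : l₂ < 1)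
    {i : ℕ → ℕ} (hi : binSeq i) : piL l₁ i ≤ piL l₂ i := by
  refine Summable.tsum_le_tsum (fun n => ?_) (summable_piL h0 (lt_of_le_of_lt h12 h2) hi)
    (summable_piL (le_trans h0 h12) h2 hi)
  exact mul_le_mul_of_nonneg_left (pow_le_pow_left₀ h0 h12 _) (by positivity)

/-- Greedy remainders. -/
def rem (l x : ℝ) : ℕ → ℝ
  | 0 => x
  | n + 1 => (rem l x n - if 1 ≤ rem l x n then 1 else 0) / l

/-- Greedy digits. -/
def dig (l x : ℝ) (n : ℕ) : ℕ := if 1 ≤ rem l x n then 1 else 0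

lemma rem_bounds {l x : ℝ} (hl : 1 / 2 ≤ l) (hl1 : l < 1) (hx0 : 0 ≤ x)
    (hx : x ≤ 1 / (1 - l)) : ∀ n, 0 ≤ rem l x n ∧ rem l x n ≤ 1 / (1 - l) := by
  have hlpos : 0 < l := by linarith
  have h1l : 0 < 1 - l := by linarith
  intro n
  induction n with
  | zero => exact ⟨hx0, hx⟩
  | succ n ih =>
    obtain ⟨hy0, hy1⟩ := ih
    by_cases hc : 1 ≤ rem l x n
    · simp only [rem, hc, if_true]
      constructor
      · exact div_nonneg (by linarith) hlpos.le
      · rw [div_le_iff₀ hlpos]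
        have e : (1 : ℝ) / (1 - l) - 1 = 1 / (1 - l) * l := by field_simp; ring
        linarith
    · simp only [rem, hc, if_false]
      constructor
      · exact div_nonneg (by linarith [not_le.mp hc]; ) hlpos.le
      · rw [div_le_iff₀ hlpos]
        have e : (1 : ℝ) ≤ 1 / (1 - l) * l := by
          rw [div_mul_eq_mul_div, le_div_iff₀ h1l]; linarith
        have := not_le.mp hc
        linarith

lemma rem_rec {l x : ℝ} (hl : 0 < l) (n : ℕ) :
    rem l x n = (dig l x n : ℝ) + l * rem l x (n + 1) := by
  by_cases hc : 1 ≤ rem l x n <;>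
  · simp only [rem, dig, hc, if_true, if_false]
    field_simp
    norm_num

lemma rem_partial {l x : ℝ} (hl : 0 < l) (N : ℕ) :
    x = (∑ m ∈ Finset.range N, (dig l x m : ℝ) * l ^ m) + l ^ N * rem l x N := by
  induction N with
  | zero => simp [rem]
  | succ N ih =>
    rw [Finset.sum_range_succ]
    have := rem_rec (x := x) hl N
    calc x = (∑ m ∈ Finset.range N, (dig l x m : ℝ) * l ^ m) + l ^ N * rem l x N := ih
      _ = _ := by rw [this]; ring

lemma hasSum_dig {l x : ℝ} (hl : 1 / 2 ≤ l) (hl1 : l < 1) (hx0 : 0 ≤ x)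
    (hx : x ≤ 1 / (1 - l)) : HasSum (fun n => (dig l x n : ℝ) * l ^ n) x := by
  have hlpos : 0 < l := by linarith
  have hb := rem_bounds hl hl1 hx0 hx
  rw [hasSum_iff_tendsto_nat_of_nonneg (fun n => by positivity)]
  have key : ∀ N, ∑ m ∈ Finset.range N, (dig l x m : ℝ) * l ^ m = x - l ^ N * rem l x N := by
    intro N
    have := rem_partial (x := x) hlpos N
    linarith
  have h0 : Filter.Tendsto (fun N : ℕ => l ^ N * rem l x N) Filter.atTop (nhds 0) := by
    refine squeeze_zero (g := fun N => l ^ N * (1 / (1 - l))) (fun N => mul_nonneg (by positivity) (hb N).1) (fun N => ?_) ?_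
    · exact mul_le_mul_of_nonneg_left (hb N).2 (by positivity)
    · have := (tendsto_pow_atTop_nhds_zero_of_lt_one hlpos.le hl1).mul_const (1 / (1 - l))
      simpa using this
  have : Filter.Tendsto (fun N : ℕ => x - l ^ N * rem l x N) Filter.atTop (nhds (x - 0)) :=
    tendsto_const_nhds.sub h0
  simp only [sub_zero] at this
  exact this.congr (fun N => (key N).symm)

lemma exists_piL_eq {l x : ℝ} (hl : 1 / 2 ≤ l) (hl1 : l < 1) (hx0 : 0 ≤ x)
    (hx : x ≤ l / (1 - l)) : ∃ j : ℕ → ℕ, binSeq j ∧ piL l j = x := by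
  have hlpos : 0 < l := by linarith
  have h1l : 0 < 1 - l := by linarith
  set y := x / l with hy
  have hy0 : 0 ≤ y := div_nonneg hx0 hlpos.le
  have hy1 : y ≤ 1 / (1 - l) := by
    show x / l ≤ 1 / (1 - l)
    rw [div_le_iff₀ hlpos, div_mul_eq_mul_div, le_div_iff₀ h1l]
    have := (le_div_iff₀ h1l).mp hx
    · nlinarith [hx]
  refine ⟨dig l y, fun n => ?_, ?_⟩
  · unfold dig; split <;> omega
  · have hs := hasSum_dig hl hl1 hy0 hy1
    have : piL l (dig l y) = (∑' n : ℕ, (dig l y n : ℝ) * l ^ n) * l := by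
      rw [piL, ← tsum_mul_right]
      refine tsum_congr fun n => ?_
      rw [pow_succ]; ring
    rw [this, hs.tsum_eq, hy, div_mul_cancel₀ _ hlpos.ne']


/-- From uniqueness, derive the strict tail conditions. -/
lemma cond_of_unique {l : ℝ} (hl : 1 / 2 < l) (hl1 : l < 1) {i : ℕ → ℕ}
    (hu : uniqueExpansion l i) (n : ℕ) :
    (i n = 0 → piL l (fun k => i (n + 1 + k)) < 1) ∧
    (i n = 1 → piL l (fun k => 1 - i (n + 1 + k)) < 1) := by
  obtain ⟨hb, huniq⟩ := hu
  have hl0 : (0 : ℝ) ≤ l := by linarith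
  have h1l : (0 : ℝ) < 1 - l := by linarith
  have hbs : binSeq (fun k => i (n + 1 + k)) := fun k => hb _
  set T := piL l (fun k => i (n + 1 + k)) with hT
  have hT0 : 0 ≤ T := piL_nonneg hl0 _
  have hTM : T ≤ l / (1 - l) := piL_le hl0 hl1 hbs
  have hM1 : (1 : ℝ) ≤ l / (1 - l) := by rw [le_div_iff₀ h1l]; linarith
  constructor
  · intro hin
    by_contra hcon
    push_neg at hcon
    -- T ≥ 1; build an alternative expansion with digit 1 at n
    obtain ⟨j', hbj', hpj'⟩ := exists_piL_eq hl.le hl1 (x := T - 1) (by linarith) (by linarith)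
    set j : ℕ → ℕ := fun m => if m < n then i m else if m = n then 1 else j' (m - (n + 1)) with hj
    have hbj : binSeq j := by
      intro m
      simp only [hj]
      split
      · exact hb m
      · split
        · exact le_refl 1
        · exact hbj' _
    have hshift : (fun k => j (n + 1 + k)) = j' := by
      funext k
      simp only [hj]
      rw [if_neg (by omega), if_neg (by omega)]
      congr 1
      omega
    have hpref : ∀ m ∈ Finset.range n, (j m : ℝ) * l ^ (m + 1) = (i m : ℝ) * l ^ (m + 1) := by
      intro m hm
      rw [Finset.mem_range] at hm
      simp [hj, hm]
    have hsplitj := piL_split hl0 hl1 hbj (n + 1)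
    have hspliti := piL_split hl0 hl1 hb (n + 1)
    have hjn : j n = 1 := by simp [hj]
    have heq : piL l j = piL l i := by
      rw [hsplitj, hspliti, Finset.sum_range_succ, Finset.sum_range_succ,
        Finset.sum_congr rfl hpref, hshift, hpj', hjn, hin, ← hT]
      push_cast
      ring
    have := huniq j hbj heq
    have : j n = i n := by rw [this]
    rw [hjn, hin] at this
    exact one_ne_zero this
  · intro hin
    by_contra hcon
    push_neg at hcon
    have hcompl : piL l (fun k => 1 - i (n + 1 + k)) = l / (1 - l) - T :=
      piL_compl hl0 hl1 hbs
    rw [hcompl] at hcon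
    -- T + 1 ≤ l/(1-l); build an alternative expansion with digit 0 at n
    obtain ⟨j', hbj', hpj'⟩ := exists_piL_eq hl.le hl1 (x := T + 1) (by linarith) (by linarith)
    set j : ℕ → ℕ := fun m => if m < n then i m else if m = n then 0 else j' (m - (n + 1)) with hj
    have hbj : binSeq j := by
      intro m
      simp only [hj]
      split
      · exact hb m
      · split
        · omega
        · exact hbj' _
    have hshift : (fun k => j (n + 1 + k)) = j' := by
      funext k
      simp only [hj]
      rw [if_neg (by omega), if_neg (by omega)]
      congr 1
      omega
    have hpref : ∀ m ∈ Finset.range n, (j m : ℝ) * l ^ (m + 1) = (i m : ℝ) * l ^ (m + 1) := by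
      intro m hm
      rw [Finset.mem_range] at hm
      simp [hj, hm]
    have hsplitj := piL_split hl0 hl1 hbj (n + 1)
    have hspliti := piL_split hl0 hl1 hb (n + 1)
    have hjn : j n = 0 := by simp [hj]
    have heq : piL l j = piL l i := by
      rw [hsplitj, hspliti, Finset.sum_range_succ, Finset.sum_range_succ,
        Finset.sum_congr rfl hpref, hshift, hpj', hjn, hin, ← hT]
      push_cast
      ring
    have := huniq j hbj heq
    have : j n = i n := by rw [this]
    rw [hjn, hin] at this
    exact zero_ne_one this

/-- The strict tail conditions imply uniqueness. -/
lemma unique_of_cond {l : ℝ} (hl0 : 0 < l) (hl1 : l < 1) {i : ℕ → ℕ} (hb : binSeq i)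
    (hc : ∀ n, (i n = 0 → piL l (fun k => i (n + 1 + k)) < 1) ∧
      (i n = 1 → piL l (fun k => 1 - i (n + 1 + k)) < 1)) :
    uniqueExpansion l i := by
  refine ⟨hb, fun j hbj hpe => ?_⟩
  by_contra hne
  have hex : ∃ m, j m ≠ i m := by
    by_contra h
    push_neg at h
    exact hne (funext h)
  set n := Nat.find hex with hn
  have hjn : j n ≠ i n := Nat.find_spec hex
  have hmin : ∀ m, m < n → j m = i m := by
    intro m hm
    by_contra h
    exact absurd (Nat.find_le h) (not_le.mpr hm)
  have h1l : (0 : ℝ) < 1 - l := by linarith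
  have hbsj : binSeq (fun k => j (n + 1 + k)) := fun k => hbj _
  have hbsi : binSeq (fun k => i (n + 1 + k)) := fun k => hb _
  set Tj := piL l (fun k => j (n + 1 + k)) with hTj
  set Ti := piL l (fun k => i (n + 1 + k)) with hTi
  have hsplitj := piL_split hl0.le hl1 hbj (n + 1)
  have hspliti := piL_split hl0.le hl1 hb (n + 1)
  have hpref : ∀ m ∈ Finset.range n, (j m : ℝ) * l ^ (m + 1) = (i m : ℝ) * l ^ (m + 1) := by
    intro m hm
    rw [Finset.mem_range] at hm
    rw [hmin m hm]
  have hkey : (j n : ℝ) * l ^ (n + 1) + l ^ (n + 1) * Tj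
      = (i n : ℝ) * l ^ (n + 1) + l ^ (n + 1) * Ti := by
    have := hpe
    rw [hsplitj, hspliti, Finset.sum_range_succ, Finset.sum_range_succ,
      Finset.sum_congr rfl hpref, ← hTj, ← hTi] at this
    linarith
  have hpow : (0 : ℝ) < l ^ (n + 1) := by positivity
  have hE : (j n : ℝ) + Tj = (i n : ℝ) + Ti := by
    have h2 : l ^ (n + 1) * ((j n : ℝ) + Tj) = l ^ (n + 1) * ((i n : ℝ) + Ti) := by
      ring_nf
      ring_nf at hkey
      linarith
    exact mul_left_cancel₀ hpow.ne' h2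
  have hTj0 : 0 ≤ Tj := piL_nonneg hl0.le _
  have hTi0 : 0 ≤ Ti := piL_nonneg hl0.le _
  have hjn1 : j n ≤ 1 := hbj n
  have hin1 : i n ≤ 1 := hb n
  have hicase : i n = 0 ∨ i n = 1 := by omega
  have hjcase : j n = 0 ∨ j n = 1 := by omega
  rcases hicase with hin' | hin' <;> rcases hjcase with hjn' | hjn'
  · exact hjn (by rw [hin', hjn'])
  · -- i n = 0, j n = 1 : Ti = 1 + Tj ≥ 1, contradicting first condition
    have h1 := (hc n).1 hin'
    rw [← hTi] at h1
    rw [hin', hjn'] at hE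
    norm_num at hE
    linarith
  · -- i n = 1, j n = 0 : Tj = 1 + Ti, so complement tail ≥ 1
    have h2 := (hc n).2 hin'
    have hcompl : piL l (fun k => 1 - i (n + 1 + k)) = l / (1 - l) - Ti :=
      piL_compl hl0.le hl1 hbsi
    rw [hcompl] at h2
    have hTjM : Tj ≤ l / (1 - l) := piL_le hl0.le hl1 hbsj
    rw [hin', hjn'] at hE
    norm_num at hE
    linarith
  · exact hjn (by rw [hin', hjn'])

end Stmt0Aux


theorem stmt0 (l₁ l₂ : ℝ) (h₁ : 1 / 2 < l₁) (h₂ : l₁ < l₂)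
    (h₃ : l₂ < (Real.sqrt 5 - 1) / 2) (i : ℕ → ℕ)
    (hi : uniqueExpansion l₂ i) : uniqueExpansion l₁ i := by
  have h5 : Real.sqrt 5 < 3 := by
    nlinarith [Real.sq_sqrt (by norm_num : (5:ℝ) ≥ 0), Real.sqrt_nonneg 5]
  have hl₂1 : l₂ < 1 := by linarith
  have hl₁1 : l₁ < 1 := by linarith
  have hl₁0 : (0:ℝ) < l₁ := by linarith
  have hl₂ : 1 / 2 < l₂ := by linarith
  obtain ⟨hbi, _⟩ := id hi
  have hc₂ := fun n => Stmt0Aux.cond_of_unique hl₂ hl₂1 hi n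
  refine Stmt0Aux.unique_of_cond hl₁0 hl₁1 hbi (fun n => ⟨fun h0 => ?_, fun h1 => ?_⟩)
  · calc piL l₁ (fun k => i (n + 1 + k)) ≤ piL l₂ (fun k => i (n + 1 + k)) :=
        Stmt0Aux.piL_mono hl₁0.le h₂.le hl₂1 (fun k => hbi _)
      _ < 1 := (hc₂ n).1 h0
  · calc piL l₁ (fun k => 1 - i (n + 1 + k)) ≤ piL l₂ (fun k => 1 - i (n + 1 + k)) :=
        Stmt0Aux.piL_mono hl₁0.le h₂.le hl₂1 (fun k => Nat.sub_le _ _)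
      _ < 1 := (hc₂ n).2 h1
end
end

section
/- Let 1/2 < λ₁ < λ₂ < g. If i ∈ {0,1}^ℕ satisfies: for all n, Π_{λ₂}(σ^{n−1} i) < λ₂ whenever i_n = 0 and Π_{λ₂}(σ^{n−1} i) > λ₂²/(1−λ₂) whenever i_n = 1 (σ the left shift), then for all n: if i_n = 0 then Π_{λ₁}(σ^{n−1} i) ≤ λ₁ − δ, and if i_n = 1 then Π_{λ₁}(σ^{n−1} i) ≥ λ₁²/(1−λ₁) + δ, where δ = min{(λ₂−λ₁)(λ₁+λ₂−1), λ₁(1−λ₁−λ₁²)/(1−λ₁)} > 0. -/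
noncomputable section

/-- The left shift by `n` places: `σ^n i`. -/
def shiftN (i : ℕ → ℕ) (n : ℕ) : ℕ → ℕ := fun m => i (m + n)

lemma summable_piL (l : ℝ) (hl0 : 0 ≤ l) (hl1 : l < 1) (j : ℕ → ℕ) (hb : binSeq j) :
    Summable (fun n : ℕ => (j n : ℝ) * l ^ (n + 1)) := by
  have hg : Summable (fun n : ℕ => l ^ (n + 1)) := by
    simpa [pow_succ] using (summable_geometric_of_lt_one hl0 hl1).mul_right l
  refine Summable.of_nonneg_of_le (fun n => by positivity) (fun n => ?_) hg
  have h : (j n : ℝ) ≤ 1 := by exact_mod_cast hb n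
  nlinarith [pow_nonneg hl0 (n+1)]

lemma piL_nonneg (l : ℝ) (hl0 : 0 ≤ l) (j : ℕ → ℕ) : 0 ≤ piL l j :=
  tsum_nonneg (fun n => by positivity)

lemma piL_le (l : ℝ) (hl0 : 0 ≤ l) (hl1 : l < 1) (j : ℕ → ℕ) (hb : binSeq j) :
    piL l j ≤ l / (1 - l) := by
  have hg : Summable (fun n : ℕ => l ^ (n + 1)) := by
    simpa [pow_succ] using (summable_geometric_of_lt_one hl0 hl1).mul_right l
  have h1 : piL l j ≤ ∑' n : ℕ, l ^ (n + 1) := by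
    refine Summable.tsum_le_tsum (fun n => ?_) (summable_piL l hl0 hl1 j hb) hg
    have h : (j n : ℝ) ≤ 1 := by exact_mod_cast hb n
    nlinarith [pow_nonneg hl0 (n+1)]
  have h2 : ∑' n : ℕ, l ^ (n + 1) = l / (1 - l) := by
    rw [show (fun n : ℕ => l ^ (n+1)) = fun n : ℕ => l ^ n * l from funext fun n => by ring,
      tsum_mul_right, tsum_geometric_of_lt_one hl0 hl1]
    field_simp
  linarith [h1, h2.le, h2.ge]

lemma piL_rec (l : ℝ) (hl0 : 0 ≤ l) (hl1 : l < 1) (i : ℕ → ℕ) (hb : binSeq i) (n : ℕ) :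
    piL l (shiftN i n) = (i n : ℝ) * l + l * piL l (shiftN i (n + 1)) := by
  have hs := summable_piL l hl0 hl1 (shiftN i n) (fun m => hb _)
  rw [piL, Summable.tsum_eq_zero_add hs]
  have h0 : ((shiftN i n 0 : ℕ) : ℝ) * l ^ (0 + 1) = (i n : ℝ) * l := by
    simp [shiftN]
  rw [h0, piL, ← tsum_mul_left]
  congr 1
  apply tsum_congr
  intro m
  have hidx : m + 1 + n = m + (n + 1) := by omega
  simp only [shiftN, hidx]
  ring

lemma piL_diff_ge (l₁ l₂ : ℝ) (h0 : 0 ≤ l₁) (h12 : l₁ ≤ l₂) (h1 : l₂ < 1)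
    (j : ℕ → ℕ) (hb : binSeq j) :
    (j 0 : ℝ) * (l₂ - l₁) ≤ piL l₂ j - piL l₁ j := by
  have hs₂ := summable_piL l₂ (h0.trans h12) h1 j hb
  have hs₁ := summable_piL l₁ h0 (lt_of_le_of_lt h12 h1) j hb
  rw [piL, piL, ← Summable.tsum_sub hs₂ hs₁]
  have key : (fun m : ℕ => (j m : ℝ) * l₂ ^ (m+1) - (j m : ℝ) * l₁ ^ (m+1)) 0
      ≤ ∑' m, ((j m : ℝ) * l₂ ^ (m+1) - (j m : ℝ) * l₁ ^ (m+1)) := by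
    refine Summable.le_tsum (hs₂.sub hs₁) 0 (fun m _ => ?_)
    have : l₁ ^ (m+1) ≤ l₂ ^ (m+1) := pow_le_pow_left₀ h0 h12 (m+1)
    nlinarith [Nat.cast_nonneg (α := ℝ) (j m)]
  simpa [mul_sub] using key

lemma piL_diff_le (l₁ l₂ : ℝ) (h0 : 0 ≤ l₁) (h12 : l₁ ≤ l₂) (h1 : l₂ < 1)
    (j : ℕ → ℕ) (hb : binSeq j) (hj0 : j 0 = 0) :
    piL l₂ j - piL l₁ j ≤ l₂ ^ 2 / (1 - l₂) - l₁ ^ 2 / (1 - l₁) := by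
  have h01 : 0 ≤ l₂ := h0.trans h12
  have h11 : l₁ < 1 := lt_of_le_of_lt h12 h1
  have hs₂ := summable_piL l₂ h01 h1 j hb
  have hs₁ := summable_piL l₁ h0 h11 j hb
  have hgeom : ∀ l : ℝ, 0 ≤ l → l < 1 → ∑' m : ℕ, l ^ (m + 2) = l ^ 2 / (1 - l) := by
    intro l hl0 hl1
    rw [show (fun m : ℕ => l ^ (m+2)) = fun m : ℕ => l ^ m * l ^ 2 from funext fun m => by ring,
      tsum_mul_right, tsum_geometric_of_lt_one hl0 hl1]
    field_simp
  have hgs : ∀ l : ℝ, 0 ≤ l → l < 1 → Summable (fun m : ℕ => l ^ (m + 2)) := by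
    intro l hl0 hl1
    rw [show (fun m : ℕ => l ^ (m+2)) = fun m : ℕ => l ^ m * l ^ 2 from funext fun m => by ring]
    exact (summable_geometric_of_lt_one hl0 hl1).mul_right _
  set g : ℕ → ℝ := fun m => if m = 0 then 0 else l₂ ^ (m+1) - l₁ ^ (m+1) with hg
  have hgsum : Summable g := by
    have : Summable (fun m : ℕ => l₂ ^ (m+1) - l₁ ^ (m+1)) := by
      have a : Summable (fun m : ℕ => l₂ ^ (m+1)) := by
        simpa [pow_succ] using (summable_geometric_of_lt_one h01 h1).mul_right l₂
      have b : Summable (fun m : ℕ => l₁ ^ (m+1)) := by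
        simpa [pow_succ] using (summable_geometric_of_lt_one h0 h11).mul_right l₁
      exact a.sub b
    refine Summable.of_nonneg_of_le (fun m => ?_) (fun m => ?_) this
    · by_cases hm : m = 0 <;>
        simp [g, hm, sub_nonneg, pow_le_pow_left₀ h0 h12]
    · by_cases hm : m = 0 <;>
        simp [g, hm, sub_nonneg, pow_le_pow_left₀ h0 h12, h12]
  have hmain : piL l₂ j - piL l₁ j ≤ ∑' m, g m := by
    rw [piL, piL, ← Summable.tsum_sub hs₂ hs₁]
    refine Summable.tsum_le_tsum (fun m => ?_) (hs₂.sub hs₁) hgsum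
    rcases Nat.eq_zero_or_pos m with hm | hm
    · subst hm; simp [g, hj0]
    · have hm' : m ≠ 0 := hm.ne'
      simp only [g, if_neg hm']
      have hpow : l₁ ^ (m+1) ≤ l₂ ^ (m+1) := pow_le_pow_left₀ h0 h12 (m+1)
      have hj1 : (j m : ℝ) ≤ 1 := by exact_mod_cast hb m
      nlinarith [Nat.cast_nonneg (α := ℝ) (j m), pow_nonneg h0 (m+1)]
  have hgval : ∑' m, g m = l₂ ^ 2 / (1 - l₂) - l₁ ^ 2 / (1 - l₁) := by
    rw [Summable.tsum_eq_zero_add hgsum]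
    have : ∀ m : ℕ, g (m + 1) = l₂ ^ (m + 2) - l₁ ^ (m + 2) := by
      intro m; simp [g]
    rw [tsum_congr this, Summable.tsum_sub (hgs l₂ h01 h1) (hgs l₁ h0 h11),
      hgeom l₂ h01 h1, hgeom l₁ h0 h11]
    simp [g]
  linarith [hmain, hgval.le, hgval.ge]

set_option maxHeartbeats 1000000 in
theorem stmt1 (l₁ l₂ : ℝ) (h₁ : 1 / 2 < l₁) (h₂ : l₁ < l₂)
    (h₃ : l₂ < (Real.sqrt 5 - 1) / 2) (i : ℕ → ℕ) (hb : binSeq i)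
    (hyp : ∀ n : ℕ, (i n = 0 → piL l₂ (shiftN i n) < l₂) ∧
      (i n = 1 → piL l₂ (shiftN i n) > l₂ ^ 2 / (1 - l₂))) :
    0 < min ((l₂ - l₁) * (l₁ + l₂ - 1)) (l₁ * (1 - l₁ - l₁ ^ 2) / (1 - l₁)) ∧
    ∀ n : ℕ,
      (i n = 0 → piL l₁ (shiftN i n) ≤
        l₁ - min ((l₂ - l₁) * (l₁ + l₂ - 1)) (l₁ * (1 - l₁ - l₁ ^ 2) / (1 - l₁))) ∧
      (i n = 1 → piL l₁ (shiftN i n) ≥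
        l₁ ^ 2 / (1 - l₁) +
          min ((l₂ - l₁) * (l₁ + l₂ - 1)) (l₁ * (1 - l₁ - l₁ ^ 2) / (1 - l₁))) := by
  have h5 : Real.sqrt 5 ^ 2 = 5 := Real.sq_sqrt (by norm_num)
  have h5n : 0 ≤ Real.sqrt 5 := Real.sqrt_nonneg 5
  have hl1_0 : (0:ℝ) < l₁ := by linarith
  have hl2_0 : (0:ℝ) < l₂ := by linarith
  have hl2sq : l₂ + l₂ ^ 2 < 1 := by nlinarith
  have hl2_1 : l₂ < 1 := by nlinarith
  have hl1_1 : l₁ < 1 := by linarith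
  have h1l₁ : (0:ℝ) < 1 - l₁ := by linarith
  have h1l₂ : (0:ℝ) < 1 - l₂ := by linarith
  have hl1sq : l₁ + l₁ ^ 2 < 1 := by nlinarith
  set d := min ((l₂ - l₁) * (l₁ + l₂ - 1)) (l₁ * (1 - l₁ - l₁ ^ 2) / (1 - l₁)) with hdd
  have hdpos : 0 < d := by
    apply lt_min
    · apply mul_pos <;> linarith
    · apply div_pos
      · apply mul_pos <;> nlinarith
      · exact h1l₁
  have hd1 : d ≤ (l₂ - l₁) * (l₁ + l₂ - 1) := min_le_left _ _
  have hd2 : d * (1 - l₁) ≤ l₁ * (1 - l₁ - l₁ ^ 2) :=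
    (le_div_iff₀ h1l₁).mp (min_le_right _ _)
  refine ⟨hdpos, fun n => ?_⟩
  -- abbreviations
  have rec1 : ∀ m, piL l₁ (shiftN i m) = (i m : ℝ) * l₁ + l₁ * piL l₁ (shiftN i (m+1)) :=
    fun m => piL_rec l₁ hl1_0.le hl1_1 i hb m
  have rec2 : ∀ m, piL l₂ (shiftN i m) = (i m : ℝ) * l₂ + l₂ * piL l₂ (shiftN i (m+1)) :=
    fun m => piL_rec l₂ hl2_0.le hl2_1 i hb m
  have hnn1 : ∀ m, 0 ≤ piL l₁ (shiftN i m) := fun m => piL_nonneg l₁ hl1_0.le _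
  have hub1 : ∀ m, piL l₁ (shiftN i m) * (1 - l₁) ≤ l₁ := fun m =>
    (le_div_iff₀ h1l₁).mp (piL_le l₁ hl1_0.le hl1_1 _ (fun k => hb _))
  constructor
  · -- case i n = 0
    intro hin
    have hR2 : piL l₂ (shiftN i n) < l₂ := (hyp n).1 hin
    have hS2 : piL l₂ (shiftN i (n+1)) < 1 := by
      rw [rec2 n, hin] at hR2
      simp at hR2
      exact lt_of_mul_lt_mul_left (by linarith [hR2]) hl2_0.le
    have hR1 : piL l₁ (shiftN i n) = l₁ * piL l₁ (shiftN i (n+1)) := by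
      rw [rec1 n, hin]; simp
    rcases Nat.le_one_iff_eq_zero_or_eq_one.mp (hb (n+1)) with h' | h'
    · -- i (n+1) = 0
      have hS1 : piL l₁ (shiftN i (n+1)) = l₁ * piL l₁ (shiftN i (n+2)) := by
        rw [rec1 (n+1), h']; simp
      have hT := hub1 (n+2)
      have hTnn := hnn1 (n+2)
      rw [hR1, hS1]
      have key : l₁ * (l₁ * piL l₁ (shiftN i (n+2))) * (1 - l₁) ≤ (l₁ - d) * (1 - l₁) := by
        nlinarith [mul_le_mul_of_nonneg_left hT (mul_pos hl1_0 hl1_0).le]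
      exact le_of_mul_le_mul_right key h1l₁
    · -- i (n+1) = 1
      have hdiff := piL_diff_ge l₁ l₂ hl1_0.le h₂.le hl2_1 (shiftN i (n+1)) (fun k => hb _)
      have h0d : (shiftN i (n+1)) 0 = 1 := by simpa [shiftN] using h'
      rw [h0d] at hdiff
      simp only [Nat.cast_one, one_mul] at hdiff
      rw [hR1]
      nlinarith [mul_lt_mul_of_pos_left hS2 hl1_0,
        mul_nonneg (sub_nonneg.mpr h₂.le) (sub_nonneg.mpr hl2_1.le),
        mul_le_mul_of_nonneg_left hdiff hl1_0.le]
  · -- case i n = 1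
    intro hin
    have hR2 : l₂ ^ 2 / (1 - l₂) < piL l₂ (shiftN i n) := (hyp n).2 hin
    have hR2' : l₂ ^ 2 < ((l₂ : ℝ) + l₂ * piL l₂ (shiftN i (n+1))) * (1 - l₂) := by
      have := (div_lt_iff₀ h1l₂).mp hR2
      rw [rec2 n, hin] at this
      simpa using this
    have hS2 : 2 * l₂ - 1 < piL l₂ (shiftN i (n+1)) * (1 - l₂) := by
      have hc : l₂ * l₂ < l₂ * ((1 + piL l₂ (shiftN i (n+1))) * (1 - l₂)) := by nlinarith
      have := lt_of_mul_lt_mul_left hc hl2_0.le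
      nlinarith
    have hR1 : piL l₁ (shiftN i n) = l₁ + l₁ * piL l₁ (shiftN i (n+1)) := by
      rw [rec1 n, hin]; simp
    rw [ge_iff_le, div_add' _ _ _ h1l₁.ne', div_le_iff₀ h1l₁, hR1]
    rcases Nat.le_one_iff_eq_zero_or_eq_one.mp (hb (n+1)) with h' | h'
    · -- i (n+1) = 0
      have h0d : (shiftN i (n+1)) 0 = 0 := by simpa [shiftN] using h'
      have hdiff := piL_diff_le l₁ l₂ hl1_0.le h₂.le hl2_1 (shiftN i (n+1)) (fun k => hb _) h0d
      have hD2 : l₂ ^ 2 / (1 - l₂) * (1 - l₂) = l₂ ^ 2 := div_mul_cancel₀ _ h1l₂.ne'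
      have hD1 : l₁ ^ 2 / (1 - l₁) * (1 - l₁) = l₁ ^ 2 := div_mul_cancel₀ _ h1l₁.ne'
      obtain ⟨S1, hS1def⟩ : ∃ x, piL l₁ (shiftN i (n+1)) = x := ⟨_, rfl⟩
      obtain ⟨S2, hS2def⟩ : ∃ x, piL l₂ (shiftN i (n+1)) = x := ⟨_, rfl⟩
      obtain ⟨D2, hD2def⟩ : ∃ x, l₂ ^ 2 / (1 - l₂) = x := ⟨_, rfl⟩
      obtain ⟨D1, hD1def⟩ : ∃ x, l₁ ^ 2 / (1 - l₁) = x := ⟨_, rfl⟩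
      rw [hD2def] at hD2 hdiff
      rw [hD1def] at hD1 hdiff
      rw [hS2def] at hS2 hdiff
      rw [hS1def] at hdiff ⊢
      -- S2 - D2 > l₂ - 1
      have hkey : l₂ - 1 < S2 - D2 := by
        by_contra hcon
        push_neg at hcon
        have p := mul_le_mul_of_nonneg_right hcon h1l₂.le
        nlinarith [p, hS2, hD2]
      have hS1 : l₂ - 1 + D1 < S1 := by linarith
      have p1 := mul_le_mul_of_nonneg_right hd1 h1l₁.le
      have p2 : (0:ℝ) ≤ (l₂ - l₁) * (1 - l₂) * (1 - l₁) :=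
        mul_nonneg (mul_nonneg (by linarith) (by linarith)) h1l₁.le
      have p3 := mul_le_mul_of_nonneg_right (mul_lt_mul_of_pos_left hS1 hl1_0).le h1l₁.le
      have p4 : l₁ * (D1 * (1 - l₁)) = l₁ * l₁ ^ 2 := by rw [hD1]
      nlinarith [p1, p2, p3, p4]
    · -- i (n+1) = 1
      have hS1 : piL l₁ (shiftN i (n+1)) = l₁ + l₁ * piL l₁ (shiftN i (n+2)) := by
        rw [rec1 (n+1), h']; simp
      have hTnn := hnn1 (n+2)
      rw [hS1]
      nlinarith [hd2, mul_nonneg (mul_nonneg hl1_0.le hl1_0.le) hTnn]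
end
end

section
/- Let λ = β₁^{-1} where β₁ > 1 is the positive solution of 1 = x^{-1} + Σ_{n≥1} x^{-2n}. If i ∈ {0,1}^ℕ is an arbitrary concatenation of words from the set 𝒫 = {1(10)^k 0 : k ≥ 0} ∪ {0(01)^k 1 : k ≥ 0}, then for all n ≥ 1, |ℓ₀(i,n) − n/2| ≤ 1, where ℓ₀(i,n) = #{k ∈ {1,…,n} : i_k = 0}. In particular the frequency of 0's in i equals 1/2. -/
noncomputable section

/-- The word `1(10)^k 0`. -/
def wordA (k : ℕ) : List ℕ := 1 :: (List.replicate k [1, 0]).flatten ++ [0]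

/-- The word `0(01)^k 1` (the flip of `wordA k`). -/
def wordB (k : ℕ) : List ℕ := 0 :: (List.replicate k [0, 1]).flatten ++ [1]

/-- The collection 𝒫 of words. -/
def wordsP : Set (List ℕ) := {w | ∃ k : ℕ, w = wordA k ∨ w = wordB k}

/-- `i` is an (infinite) concatenation of words from 𝒫: there are cut points
`0 = t 0 < t 1 < ⋯` such that each block of `i` between consecutive cut points
is a word of 𝒫. -/
def isConcatOfP (i : ℕ → ℕ) : Prop :=
  ∃ t : ℕ → ℕ, t 0 = 0 ∧ StrictMono t ∧
    ∀ m : ℕ, (List.ofFn fun a : Fin (t (m + 1) - t m) => i (t m + a)) ∈ wordsP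

/-- `ℓ₀(i,n)`: the number of zeros among the first `n` digits of `i`. -/
def countZeros (i : ℕ → ℕ) (n : ℕ) : ℕ := ((Finset.range n).filter fun m => i m = 0).card

lemma flatlen (x y : ℕ) (k : ℕ) : ((List.replicate k [x, y]).flatten).length = 2 * k := by
  induction k with
  | zero => simp
  | succ k ih => simp only [List.replicate_succ, List.flatten_cons, List.length_append, ih]; simp; omega

lemma wordA_len (k : ℕ) : (wordA k).length = 2 * k + 2 := by
  simp [wordA, flatlen]; ring

lemma flat_getElem (x y : ℕ) : ∀ (k a : ℕ) (h : a < 2 * k),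
    ((List.replicate k [x, y]).flatten)[a]'(by rw [flatlen]; exact h)
      = if a % 2 = 0 then x else y := by
  intro k
  induction k with
  | zero => omega
  | succ k ih =>
    intro a h
    have e : (List.replicate (k+1) [x, y]).flatten = x :: y :: (List.replicate k [x, y]).flatten := by
      simp [List.replicate_succ]
    match a with
    | 0 => simp [e]
    | 1 => simp [e]
    | (a+2) =>
      have h' : a < 2 * k := by omega
      have := ih a h'
      simp only [e, List.getElem_cons_succ]
      rw [this]
      have : (a + 2) % 2 = a % 2 := by omega
      rw [this]

lemma wordA_getElem (k a : ℕ) (h : a < 2 * k + 2) :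
    (wordA k)[a]'(by rw [wordA_len]; exact h)
      = if a = 0 ∨ (a % 2 = 1 ∧ a ≠ 2 * k + 1) then 1 else 0 := by
  have e : wordA k = 1 :: ((List.replicate k [1, 0]).flatten ++ [0]) := rfl
  match a with
  | 0 => simp [e]
  | (b+1) =>
    simp only [e, List.getElem_cons_succ]
    by_cases hb : b < 2 * k
    · rw [List.getElem_append_left (by rw [flatlen]; exact hb)]
      rw [flat_getElem 1 0 k b hb]
      by_cases hpar : b % 2 = 0
      · rw [if_pos hpar, if_pos (show b + 1 = 0 ∨ ((b+1) % 2 = 1 ∧ b + 1 ≠ 2 * k + 1) by omega)]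
      · rw [if_neg hpar, if_neg (show ¬(b + 1 = 0 ∨ ((b+1) % 2 = 1 ∧ b + 1 ≠ 2 * k + 1)) by omega)]
    · have hb2 : b = 2 * k := by omega
      subst hb2
      rw [List.getElem_append_right (by rw [flatlen])]
      rw [if_neg (show ¬(2*k + 1 = 0 ∨ ((2*k+1) % 2 = 1 ∧ 2*k + 1 ≠ 2 * k + 1)) by omega)]
      simp [flatlen]

lemma wordB_getElem (k a : ℕ) (h : a < 2 * k + 2) :
    (wordB k)[a]'(by simp [wordB, flatlen]; omega)
      = if a = 0 ∨ (a % 2 = 1 ∧ a ≠ 2 * k + 1) then 0 else 1 := by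
  have e : wordB k = 0 :: ((List.replicate k [0, 1]).flatten ++ [1]) := rfl
  match a with
  | 0 => simp [e]
  | (b+1) =>
    simp only [e, List.getElem_cons_succ]
    by_cases hb : b < 2 * k
    · rw [List.getElem_append_left (by rw [flatlen]; exact hb)]
      rw [flat_getElem 0 1 k b hb]
      by_cases hpar : b % 2 = 0
      · rw [if_pos hpar, if_pos (show b + 1 = 0 ∨ ((b+1) % 2 = 1 ∧ b + 1 ≠ 2 * k + 1) by omega)]
      · rw [if_neg hpar, if_neg (show ¬(b + 1 = 0 ∨ ((b+1) % 2 = 1 ∧ b + 1 ≠ 2 * k + 1)) by omega)]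
    · have hb2 : b = 2 * k := by omega
      subst hb2
      rw [List.getElem_append_right (by rw [flatlen])]
      rw [if_neg (show ¬(2*k + 1 = 0 ∨ ((2*k+1) % 2 = 1 ∧ 2*k + 1 ≠ 2 * k + 1)) by omega)]
      simp [flatlen]

lemma cnt_succ (f : ℕ → Prop) [DecidablePred f] (j : ℕ) :
    ((Finset.range (j+1)).filter f).card
      = ((Finset.range j).filter f).card + if f j then 1 else 0 := by
  rw [Finset.range_add_one, Finset.filter_insert]
  by_cases h : f j
  · rw [if_pos h, if_pos h, Finset.card_insert_of_notMem (by simp)]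
  · rw [if_neg h, if_neg h, Nat.add_zero]

lemma blockA_cnt (i : ℕ → ℕ) (s k : ℕ)
    (dig : ∀ a, a < 2*k+2 → i (s+a) = if a = 0 ∨ (a % 2 = 1 ∧ a ≠ 2*k+1) then 1 else 0) :
    ∀ j ≤ 2*k+2, ((Finset.range j).filter fun a => i (s + a) = 0).card
      = if j = 2*k+2 then k+1 else (j-1)/2 := by
  intro j
  induction j with
  | zero => intro _; simp
  | succ j ih =>
    intro hj
    rw [cnt_succ, ih (by omega), if_neg (show j ≠ 2*k+2 by omega), dig j (by omega)]
    split_ifs <;> first | exact absurd ‹False› not_false | omega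

lemma blockB_cnt (i : ℕ → ℕ) (s k : ℕ)
    (dig : ∀ a, a < 2*k+2 → i (s+a) = if a = 0 ∨ (a % 2 = 1 ∧ a ≠ 2*k+1) then 0 else 1) :
    ∀ j ≤ 2*k+2, ((Finset.range j).filter fun a => i (s + a) = 0).card
      = if j = 2*k+2 then k+1 else j - (j-1)/2 := by
  intro j
  induction j with
  | zero => intro _; simp
  | succ j ih =>
    intro hj
    rw [cnt_succ, ih (by omega), if_neg (show j ≠ 2*k+2 by omega), dig j (by omega)]
    split_ifs <;> first | exact absurd ‹False› not_false | omega


lemma countZeros_add (i : ℕ → ℕ) (s j : ℕ) :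
    countZeros i (s + j) = countZeros i s + ((Finset.range j).filter fun a => i (s + a) = 0).card := by
  induction j with
  | zero => simp [countZeros]
  | succ j ih =>
    have h1 : countZeros i ((s+j)+1) = countZeros i (s+j) + if i (s+j) = 0 then 1 else 0 :=
      cnt_succ (fun m => i m = 0) (s+j)
    have h2 : ((Finset.range (j+1)).filter fun a => i (s + a) = 0).card
        = ((Finset.range j).filter fun a => i (s + a) = 0).card + if i (s+j) = 0 then 1 else 0 :=
      cnt_succ (fun a => i (s + a) = 0) j
    rw [show s + (j+1) = (s+j)+1 by omega, h1, h2, ih, Nat.add_assoc]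

lemma block_bounds (i : ℕ → ℕ) (s L : ℕ)
    (h : (List.ofFn fun a : Fin L => i (s + a)) ∈ wordsP) :
    0 < L ∧ 2 * ((Finset.range L).filter fun a => i (s + a) = 0).card = L ∧
      ∀ j ≤ L, 2 * ((Finset.range j).filter fun a => i (s + a) = 0).card ≤ j + 2 ∧
        j ≤ 2 * ((Finset.range j).filter fun a => i (s + a) = 0).card + 2 := by
  obtain ⟨k, hk | hk⟩ := h
  · have hL : L = 2 * k + 2 := by
      have := congrArg List.length hk
      rw [wordA_len] at this
      simpa using this
    subst hL
    have dig : ∀ a, a < 2*k+2 → i (s+a)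
        = if a = 0 ∨ (a % 2 = 1 ∧ a ≠ 2*k+1) then 1 else 0 := by
      intro a ha
      have h1 : (List.ofFn fun a : Fin (2*k+2) => i (s + a))[a]'(by simp; omega)
          = (wordA k)[a]'(by rw [wordA_len]; exact ha) := List.getElem_of_eq hk _
      rw [List.getElem_ofFn] at h1
      rw [wordA_getElem k a ha] at h1
      simpa using h1
    have hc := blockA_cnt i s k dig
    refine ⟨by omega, ?_, ?_⟩
    · rw [hc (2*k+2) le_rfl, if_pos rfl]; omega
    · intro j hj
      rw [hc j hj]
      split_ifs <;> omega
  · have hL : L = 2 * k + 2 := by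
      have := congrArg List.length hk
      simp [wordB, flatlen] at this
      omega
    subst hL
    have dig : ∀ a, a < 2*k+2 → i (s+a)
        = if a = 0 ∨ (a % 2 = 1 ∧ a ≠ 2*k+1) then 0 else 1 := by
      intro a ha
      have h1 : (List.ofFn fun a : Fin (2*k+2) => i (s + a))[a]'(by simp; omega)
          = (wordB k)[a]'(by simp [wordB, flatlen]; omega) := List.getElem_of_eq hk _
      rw [List.getElem_ofFn] at h1
      rw [wordB_getElem k a ha] at h1
      simpa using h1
    have hc := blockB_cnt i s k dig
    refine ⟨by omega, ?_, ?_⟩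
    · rw [hc (2*k+2) le_rfl, if_pos rfl]; omega
    · intro j hj
      rw [hc j hj]
      split_ifs <;> omega


theorem stmt2 (β₁ : ℝ) (hβ : 1 < β₁)
    (hroot : 1 = β₁⁻¹ + ∑' n : ℕ, (β₁ ^ (2 * (n + 1)))⁻¹)
    (l : ℝ) (hl : l = β₁⁻¹)
    (i : ℕ → ℕ) (hi : isConcatOfP i) :
    (∀ n : ℕ, 1 ≤ n → |(countZeros i n : ℝ) - n / 2| ≤ 1) ∧
    Filter.Tendsto (fun n : ℕ => (countZeros i n : ℝ) / n) Filter.atTop (nhds (1 / 2)) := by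
  obtain ⟨t, ht0, htm, htP⟩ := hi
  have key : ∀ m, 2 * countZeros i (t m) = t m := by
    intro m
    induction m with
    | zero => simp [ht0, countZeros]
    | succ m ih =>
      obtain ⟨hpos, hfull, -⟩ := block_bounds i (t m) (t (m+1) - t m) (htP m)
      have hle : t m ≤ t (m+1) := (htm (show m < m + 1 by omega)).le
      have hca := countZeros_add i (t m) (t (m+1) - t m)
      rw [show t m + (t (m+1) - t m) = t (m+1) by omega] at hca
      omega
  have main : ∀ n : ℕ, n ≤ 2 * countZeros i n + 2 ∧ 2 * countZeros i n ≤ n + 2 := by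
    intro n
    have hex : ∀ n : ℕ, ∃ m, t m ≤ n ∧ n < t (m + 1) := by
      intro n
      induction n with
      | zero =>
        refine ⟨0, le_of_eq ht0, ?_⟩
        have := htm (show 0 < 0 + 1 by omega)
        omega
      | succ n ihn =>
        obtain ⟨m, hm1, hm2⟩ := ihn
        by_cases hc : n + 1 < t (m + 1)
        · exact ⟨m, by omega, hc⟩
        · refine ⟨m + 1, by omega, ?_⟩
          have := htm (show m + 1 < m + 1 + 1 by omega)
          omega
    obtain ⟨m, hmn, hm0⟩ := hex n
    obtain ⟨hpos, hfull, hbd⟩ := block_bounds i (t m) (t (m+1) - t m) (htP m)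
    have hkm := key m
    have hle : t m ≤ t (m+1) := (htm (show m < m + 1 by omega)).le
    have hca := countZeros_add i (t m) (n - t m)
    rw [show t m + (n - t m) = n by omega] at hca
    have hb := hbd (n - t m) (by omega)
    omega
  have hbound : ∀ n : ℕ, 1 ≤ n → |(countZeros i n : ℝ) - n / 2| ≤ 1 := by
    intro n _
    have h1 : (n : ℝ) ≤ 2 * (countZeros i n : ℝ) + 2 := by exact_mod_cast (main n).1
    have h2 : 2 * (countZeros i n : ℝ) ≤ (n : ℝ) + 2 := by exact_mod_cast (main n).2
    rw [abs_le]
    constructor <;> linarith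
  refine ⟨hbound, ?_⟩
  rw [tendsto_iff_dist_tendsto_zero]
  apply squeeze_zero' (g := fun n : ℕ => 1 / (n : ℝ))
    (Filter.Eventually.of_forall fun n => dist_nonneg)
  · filter_upwards [Filter.eventually_ge_atTop 1] with n hn
    have hn' : (0 : ℝ) < n := by exact_mod_cast hn
    rw [Real.dist_eq]
    have hb := hbound n hn
    have hhalf : ((n : ℝ) / 2) / n = 1 / 2 := by
      rw [div_div, mul_comm, ← div_div, div_self hn'.ne']
    have he : (countZeros i n : ℝ) / n - 1 / 2 = ((countZeros i n : ℝ) - n / 2) / n := by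
      rw [sub_div, hhalf]
    rw [he, abs_div, abs_of_pos hn']
    gcongr
  · exact tendsto_one_div_atTop_nhds_zero_nat
end
end

section
/- Fix k ≥ 2 and let Σ ⊆ {0,1}^ℕ be the set of sequences obtained as infinite concatenations of the two words u₀ = 1(10)^{k+1} and u₁ = 0(01)^{k+1} (each of length 2k+3). Then for every r in the closed interval [(k+1)/(2k+3), (k+2)/(2k+3)] there exists i ∈ Σ with freq₀(i) = r, and there also exists i ∈ Σ for which freq₀(i) does not exist. -/
noncomputable section

/-- The word `u₀ = 1(10)^{k+1}`, of length `2k+3`. -/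
def wordU0 (k : ℕ) : List ℕ := 1 :: (List.replicate (k + 1) [1, 0]).flatten

/-- The word `u₁ = 0(01)^{k+1}`, of length `2k+3`. -/
def wordU1 (k : ℕ) : List ℕ := 0 :: (List.replicate (k + 1) [0, 1]).flatten

/-- The set Σ of infinite concatenations of the blocks `u₀`, `u₁`: for some choice
function `a`, the `m`-th block of `i` (of length `2k+3`) is `u₀` or `u₁` according to `a m`. -/
def sigmaSet (k : ℕ) : Set (ℕ → ℕ) :=
  {i | ∃ a : ℕ → Bool, ∀ n : ℕ,
    i n = (if a (n / (2 * k + 3)) then wordU0 k else wordU1 k).getD (n % (2 * k + 3)) 0}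

/-- `freq₀(i) = r`. -/
def hasFreqZero (i : ℕ → ℕ) (r : ℝ) : Prop :=
  Filter.Tendsto (fun n : ℕ => (countZeros i n : ℝ) / n) Filter.atTop (nhds r)

open Filter


namespace S3

/-- letters of flatten of replicate of a 2-letter word -/
lemma flatten_getD (x y : ℕ) : ∀ (n q : ℕ), q < 2*n →
    ((List.replicate n [x,y]).flatten).getD q 0 = if q % 2 = 0 then x else y := by
  intro n
  induction n with
  | zero => intro q hq; omega
  | succ n ih =>
    intro q hq
    rw [List.replicate_succ, List.flatten_cons]
    match q with
    | 0 => simp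
    | 1 => simp
    | (r+2) =>
      have : ([x,y] ++ (List.replicate n [x,y]).flatten).getD (r+2) 0
          = ((List.replicate n [x,y]).flatten).getD r 0 := by
        simp [List.getD_append_right]
      rw [this, ih r (by omega)]
      have : (r+2) % 2 = r % 2 := by omega
      rw [this]

lemma getD_u0 (k p : ℕ) (hp : p < 2*k+3) :
    (wordU0 k).getD p 0 = if p % 2 = 0 ∧ p ≠ 0 then 0 else 1 := by
  unfold wordU0
  match p with
  | 0 => simp
  | (q+1) =>
    rw [List.getD_cons_succ, flatten_getD (x:=1) (y:=0) (k+1) q (by omega)]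
    rcases Nat.even_or_odd q with h | h
    · have h2 : q % 2 = 0 := Nat.even_iff.mp h
      have h3 : (q+1) % 2 = 1 := by omega
      simp [h2, h3]
    · have h2 : q % 2 = 1 := Nat.odd_iff.mp h
      have h3 : (q+1) % 2 = 0 := by omega
      simp [h2, h3]
lemma getD_u1 (k p : ℕ) (hp : p < 2*k+3) :
    (wordU1 k).getD p 0 = if p = 0 ∨ p % 2 = 1 then 0 else 1 := by
  unfold wordU1
  match p with
  | 0 => simp
  | (q+1) =>
    rw [List.getD_cons_succ, flatten_getD (x:=0) (y:=1) (k+1) q (by omega)]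
    rcases Nat.even_or_odd q with h | h
    · have h2 : q % 2 = 0 := Nat.even_iff.mp h
      have h3 : (q+1) % 2 = 1 := by omega
      simp [h2, h3]
    · have h2 : q % 2 = 1 := Nat.odd_iff.mp h
      have h3 : (q+1) % 2 = 0 := by omega
      simp [h2, h3]

/-- word chosen by a bool -/
def word (k : ℕ) (b : Bool) : List ℕ := if b then wordU0 k else wordU1 k

def seqOf (k : ℕ) (a : ℕ → Bool) : ℕ → ℕ :=
  fun n => (word k (a (n / (2*k+3)))).getD (n % (2*k+3)) 0

lemma seqOf_mem (k : ℕ) (a : ℕ → Bool) : seqOf k a ∈ sigmaSet k :=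
  ⟨a, fun n => by simp [seqOf, word]⟩

/-- count of `false` among first N values of a -/
def cF (a : ℕ → Bool) (N : ℕ) : ℕ := ((Finset.range N).filter fun m => a m = false).card

/-- zeros among first s letters of word -/
def wz (k : ℕ) (b : Bool) (s : ℕ) : ℕ :=
  ((Finset.range s).filter fun p => (word k b).getD p 0 = 0).card

lemma cF_succ (a : ℕ → Bool) (N : ℕ) :
    cF a (N+1) = cF a N + if a N = false then 1 else 0 := by
  unfold cF
  rw [Finset.range_add_one, Finset.filter_insert]
  split
  · rw [Finset.card_insert_of_notMem (by simp)]
  · simp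

lemma wz_succ (k : ℕ) (b : Bool) (s : ℕ) :
    wz k b (s+1) = wz k b s + if (word k b).getD s 0 = 0 then 1 else 0 := by
  unfold wz
  rw [Finset.range_add_one, Finset.filter_insert]
  split
  · rw [Finset.card_insert_of_notMem (by simp)]
  · simp

lemma wz_le (k : ℕ) (b : Bool) (s : ℕ) : wz k b s ≤ s := by
  calc wz k b s ≤ (Finset.range s).card := Finset.card_filter_le _ _
    _ = s := Finset.card_range s
lemma count_pred0 : ∀ k : ℕ, ((Finset.range (2*k+3)).filter fun p => p % 2 = 0 ∧ p ≠ 0).card = k+1 := by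
  intro k
  induction k with
  | zero => decide
  | succ k ih =>
    have h1 : 2*(k+1)+3 = (2*k+4)+1 := by omega
    have h2 : 2*k+4 = (2*k+3)+1 := by omega
    rw [h1, Finset.range_add_one, Finset.filter_insert, h2, Finset.range_add_one, Finset.filter_insert]
    rw [if_pos (by omega), if_neg (by omega)]
    rw [Finset.card_insert_of_notMem (by simp)]
    omega

lemma count_pred1 : ∀ k : ℕ, ((Finset.range (2*k+3)).filter fun p => p = 0 ∨ p % 2 = 1).card = k+2 := by
  intro k
  induction k with
  | zero => decide
  | succ k ih =>
    have h1 : 2*(k+1)+3 = (2*k+4)+1 := by omega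
    have h2 : 2*k+4 = (2*k+3)+1 := by omega
    rw [h1, Finset.range_add_one, Finset.filter_insert, h2, Finset.range_add_one, Finset.filter_insert]
    rw [if_neg (by omega), if_pos (by omega)]
    rw [Finset.card_insert_of_notMem (by simp)]
    omega

lemma wz_full (k : ℕ) (b : Bool) : wz k b (2*k+3) = if b then k+1 else k+2 := by
  cases b with
  | true =>
    unfold wz word
    rw [if_pos rfl, if_pos rfl, ← count_pred0 k]
    congr 1
    apply Finset.filter_congr
    intro p hp
    rw [Finset.mem_range] at hp
    rw [getD_u0 k p hp]
    constructor
    · intro h; by_contra hc; rw [if_neg hc] at h; exact one_ne_zero h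
    · intro h; rw [if_pos h]
  | false =>
    unfold wz word
    rw [if_neg (by simp), if_neg (by simp), ← count_pred1 k]
    congr 1
    apply Finset.filter_congr
    intro p hp
    rw [Finset.mem_range] at hp
    rw [getD_u1 k p hp]
    constructor
    · intro h; by_contra hc; rw [if_neg hc] at h; exact one_ne_zero h
    · intro h; rw [if_pos h]
lemma countZeros_succ (i : ℕ → ℕ) (n : ℕ) :
    countZeros i (n+1) = countZeros i n + if i n = 0 then 1 else 0 := by
  unfold countZeros
  rw [Finset.range_add_one, Finset.filter_insert]
  split
  · rw [Finset.card_insert_of_notMem (by simp)]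
  · simp

lemma countZeros_formula (k : ℕ) (a : ℕ → Bool) (n : ℕ) :
    countZeros (seqOf k a) n
      = (k+1) * (n / (2*k+3)) + cF a (n / (2*k+3)) + wz k (a (n / (2*k+3))) (n % (2*k+3)) := by
  set L := 2*k+3 with hL
  induction n with
  | zero => simp [countZeros, cF, wz]
  | succ n ih =>
    rw [countZeros_succ, ih]
    have hs : n % L < L := Nat.mod_lt _ (by omega)
    have hnd : n = L * (n / L) + n % L := (Nat.div_add_mod n L).symm
    set q := n / L with hq
    set s := n % L with hsx
    have hseq : seqOf k a n = (word k (a q)).getD s 0 := rfl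
    by_cases hcase : s + 1 < L
    · have hd : (n+1) / L = q := by
        rw [hnd]
        have h3 : L * q + s + 1 = L * q + (s+1) := by omega
        rw [h3, Nat.mul_add_div (by omega), Nat.div_eq_of_lt hcase]
        omega
      have hm : (n+1) % L = s + 1 := by
        rw [hnd]
        have h3 : L * q + s + 1 = L * q + (s+1) := by omega
        rw [h3, Nat.mul_add_mod, Nat.mod_eq_of_lt hcase]
      rw [hd, hm, wz_succ, hseq]
      omega
    · have hsL : s + 1 = L := by omega
      have hd : (n+1) / L = q + 1 := by
        rw [hnd]
        have h3 : L * q + s + 1 = L * (q+1) := by rw [Nat.mul_succ]; omega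
        rw [h3, Nat.mul_div_cancel_left _ (show 0 < L by omega)]
      have hm : (n+1) % L = 0 := by
        rw [hnd]
        have h3 : L * q + s + 1 = L * (q+1) := by rw [Nat.mul_succ]; omega
        rw [h3, Nat.mul_mod_right]
      rw [hd, hm]
      have hw : wz k (a q) s + (if (word k (a q)).getD s 0 = 0 then 1 else 0)
          = wz k (a q) L := by rw [← wz_succ, hsL]
      rw [wz_full k (a q)] at hw
      have hcf : cF a (q+1) = cF a q + if a q = false then 1 else 0 := cF_succ a q
      have hwz0 : wz k (a (q+1)) 0 = 0 := by simp [wz]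
      rw [hseq, hwz0, hcf]
      have hmul : (k+1)*(q+1) = (k+1)*q + (k+1) := by ring
      rcases Bool.eq_false_or_eq_true (a q) with haq | haq
      · rw [haq] at hw hcf ⊢
        simp only [Bool.true_eq_false, Bool.false_eq_true, reduceIte] at hw hcf ⊢
        omega
      · rw [haq] at hw hcf ⊢
        simp only [Bool.true_eq_false, Bool.false_eq_true, reduceIte] at hw hcf ⊢
        omega
lemma tendsto_div_const_atTop (L : ℕ) (hL : 0 < L) :
    Tendsto (fun n : ℕ => n / L) atTop atTop := by
  apply Filter.tendsto_atTop_atTop.mpr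
  intro b
  refine ⟨L * b, fun n hn => ?_⟩
  exact (Nat.le_div_iff_mul_le hL).mpr (by rw [mul_comm]; exact hn)

lemma aux_ratio_tendsto : Tendsto (fun q : ℕ => (q : ℝ) / (q + 1)) atTop (nhds 1) := by
  have h0 : Tendsto (fun q : ℕ => 1 - 1 / ((q:ℝ) + 1)) atTop (nhds (1 - 0)) :=
    tendsto_const_nhds.sub tendsto_one_div_add_atTop_nhds_zero_nat
  rw [sub_zero] at h0
  refine h0.congr fun q => ?_
  have hq : (q:ℝ) + 1 ≠ 0 := by positivity
  field_simp
  ring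

lemma aux_inv_tendsto : Tendsto (fun q : ℕ => 1 / (q : ℝ)) atTop (nhds 0) := by
  exact tendsto_one_div_atTop_nhds_zero_nat

lemma freq_of_cF (k : ℕ) (a : ℕ → Bool) (t : ℝ)
    (hc : Tendsto (fun N : ℕ => (cF a N : ℝ) / N) atTop (nhds t)) :
    hasFreqZero (seqOf k a) ((k + 1 + t) / (2 * k + 3)) := by
  set L : ℕ := 2 * k + 3 with hLdef
  have hL : 0 < L := by omega
  have hLr : (0:ℝ) < (L:ℝ) := by positivity
  set G : ℕ → ℝ := fun q => (((k:ℝ)+1) * q + cF a q) / (L * (q + 1)) with hG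
  set H : ℕ → ℝ := fun q => (((k:ℝ)+1) * q + cF a q + L) / (L * q) with hH
  have TG : Tendsto G atTop (nhds (((k:ℝ) + 1 + t) / L)) := by
    have h1 : Tendsto (fun q : ℕ => (((k:ℝ)+1) + (cF a q : ℝ) / q) * ((q:ℝ)/(q+1)) / L)
        atTop (nhds (((k:ℝ)+1+t) * 1 / L)) :=
      ((tendsto_const_nhds.add hc).mul aux_ratio_tendsto).div_const _
    rw [mul_one] at h1
    refine h1.congr' ?_
    filter_upwards [Filter.eventually_ge_atTop 1] with q hq
    have hq0 : (q:ℝ) ≠ 0 := Nat.cast_ne_zero.mpr (by omega)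
    have hq1 : (q:ℝ) + 1 ≠ 0 := by positivity
    show (((k:ℝ)+1) + (cF a q : ℝ) / q) * ((q:ℝ)/(q+1)) / L = G q
    rw [hG]
    show _ = (((k:ℝ)+1) * q + cF a q) / (L * (q + 1))
    rw [div_eq_div_iff (by positivity) (by positivity)]
    field_simp
  have TH : Tendsto H atTop (nhds (((k:ℝ) + 1 + t) / L)) := by
    have h1 : Tendsto (fun q : ℕ => (((k:ℝ)+1) + (cF a q : ℝ) / q + (L:ℝ) * (1/(q:ℝ))) / L)
        atTop (nhds (((k:ℝ)+1+t+(L:ℝ)*0) / L)) :=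
      (((tendsto_const_nhds.add hc).add (aux_inv_tendsto.const_mul _))).div_const _
    rw [mul_zero, add_zero] at h1
    refine h1.congr' ?_
    filter_upwards [Filter.eventually_ge_atTop 1] with q hq
    have hq0 : (q:ℝ) ≠ 0 := Nat.cast_ne_zero.mpr (by omega)
    show (((k:ℝ)+1) + (cF a q : ℝ) / q + (L:ℝ) * (1/(q:ℝ))) / L = H q
    rw [hH]
    show _ = (((k:ℝ)+1) * q + cF a q + L) / (L * q)
    rw [div_eq_div_iff (by positivity) (by positivity)]
    field_simp
  have Tq : Tendsto (fun n : ℕ => n / L) atTop atTop := tendsto_div_const_atTop L hL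
  have TGc : Tendsto (fun n : ℕ => G (n / L)) atTop (nhds (((k:ℝ) + 1 + t) / L)) := TG.comp Tq
  have THc : Tendsto (fun n : ℕ => H (n / L)) atTop (nhds (((k:ℝ) + 1 + t) / L)) := TH.comp Tq
  have key : Tendsto (fun n : ℕ => (countZeros (seqOf k a) n : ℝ) / n) atTop
      (nhds (((k:ℝ) + 1 + t) / L)) := by
    refine tendsto_of_tendsto_of_tendsto_of_le_of_le' TGc THc ?_ ?_
    · filter_upwards [Filter.eventually_ge_atTop L] with n hn
      set q := n / L with hqdef
      have hq1 : 1 ≤ q := (Nat.one_le_div_iff hL).mpr hn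
      have hn1 : 1 ≤ n := le_trans hL hn
      have hform := countZeros_formula k a n
      rw [← hLdef, ← hqdef] at hform
      have hdm : L * q + n % L = n := by rw [hqdef]; exact Nat.div_add_mod n L
      have hmlt : n % L < L := Nat.mod_lt n hL
      have hub : n < L * (q + 1) := by rw [Nat.mul_succ]; omega
      have hlow : (k+1) * q + cF a q ≤ countZeros (seqOf k a) n := by omega
      rw [hG]
      have hn0 : (0:ℝ) < (n:ℝ) := by positivity
      have hden : (0:ℝ) < (L:ℝ) * ((q:ℝ) + 1) := by positivity
      rw [div_le_div_iff₀ hden hn0]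
      have c1 : ((k:ℝ)+1) * q + cF a q ≤ (countZeros (seqOf k a) n : ℝ) := by
        exact_mod_cast hlow
      have c2 : (n:ℝ) ≤ (L:ℝ) * ((q:ℝ) + 1) := by exact_mod_cast le_of_lt hub
      have hnum0 : (0:ℝ) ≤ ((k:ℝ)+1) * q + cF a q := by positivity
      calc (((k:ℝ)+1) * q + cF a q) * n ≤ (countZeros (seqOf k a) n : ℝ) * ((L:ℝ) * ((q:ℝ)+1)) :=
            mul_le_mul c1 c2 (le_of_lt hn0) (by positivity)
        _ = _ := rfl
    · filter_upwards [Filter.eventually_ge_atTop L] with n hn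
      set q := n / L with hqdef
      have hq1 : 1 ≤ q := (Nat.one_le_div_iff hL).mpr hn
      have hn1 : 1 ≤ n := le_trans hL hn
      have hform := countZeros_formula k a n
      rw [← hLdef, ← hqdef] at hform
      have hdm : L * q + n % L = n := by rw [hqdef]; exact Nat.div_add_mod n L
      have hmlt : n % L < L := Nat.mod_lt n hL
      have hwle : wz k (a q) (n % L) ≤ L := le_trans (wz_le _ _ _) (le_of_lt hmlt)
      have hup : countZeros (seqOf k a) n ≤ (k+1) * q + cF a q + L := by omega
      have hlb : L * q ≤ n := by omega
      rw [hH]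
      have hn0 : (0:ℝ) < (n:ℝ) := by positivity
      have hq0 : (0:ℝ) < (q:ℝ) := by
        have : (0:ℕ) < q := hq1
        exact_mod_cast this
      have hden : (0:ℝ) < (L:ℝ) * (q:ℝ) := by positivity
      rw [div_le_div_iff₀ hn0 hden]
      have c1 : (countZeros (seqOf k a) n : ℝ) ≤ ((k:ℝ)+1) * q + cF a q + L := by
        exact_mod_cast hup
      have c2 : (L:ℝ) * (q:ℝ) ≤ (n:ℝ) := by exact_mod_cast hlb
      calc (countZeros (seqOf k a) n : ℝ) * ((L:ℝ) * (q:ℝ))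
            ≤ (((k:ℝ)+1) * q + cF a q + L) * n :=
            mul_le_mul c1 c2 (by positivity) (by positivity)
        _ = _ := rfl
  unfold hasFreqZero
  have : ((k:ℝ) + 1 + t) / (L:ℝ) = ((k:ℝ) + 1 + t) / (2 * (k:ℝ) + 3) := by
    rw [hLdef]; push_cast; ring_nf
  rw [← this]
  exact key
/-- the floor-increment boolean sequence for density t -/
def aFloor (t : ℝ) : ℕ → Bool := fun m => decide (⌊((m:ℝ)+1) * t⌋₊ = ⌊(m:ℝ) * t⌋₊)

lemma floor_step (t : ℝ) (h0 : 0 ≤ t) (h1 : t ≤ 1) (N : ℕ) :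
    ⌊((N:ℝ)+1) * t⌋₊ = ⌊(N:ℝ) * t⌋₊ ∨ ⌊((N:ℝ)+1) * t⌋₊ = ⌊(N:ℝ) * t⌋₊ + 1 := by
  have hmono : ⌊(N:ℝ) * t⌋₊ ≤ ⌊((N:ℝ)+1) * t⌋₊ :=
    Nat.floor_mono (mul_le_mul_of_nonneg_right (by linarith) h0)
  have hup : ⌊((N:ℝ)+1) * t⌋₊ ≤ ⌊(N:ℝ) * t⌋₊ + 1 := by
    have h2 : ((N:ℝ)+1) * t ≤ (N:ℝ) * t + 1 := by nlinarith
    have h3 : ⌊(N:ℝ) * t + 1⌋₊ = ⌊(N:ℝ) * t⌋₊ + 1 := by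
      exact_mod_cast Nat.floor_add_one (by positivity)
    calc ⌊((N:ℝ)+1) * t⌋₊ ≤ ⌊(N:ℝ) * t + 1⌋₊ := Nat.floor_mono h2
      _ = _ := h3
  omega

lemma cF_aFloor (t : ℝ) (h0 : 0 ≤ t) (h1 : t ≤ 1) (N : ℕ) :
    cF (aFloor t) N = ⌊(N:ℝ) * t⌋₊ := by
  induction N with
  | zero => simp [cF]
  | succ N ih =>
    rw [cF_succ, ih]
    have hcast : ((N+1 : ℕ):ℝ) = (N:ℝ) + 1 := by push_cast; ring
    rw [hcast]
    by_cases h : ⌊((N:ℝ)+1) * t⌋₊ = ⌊(N:ℝ) * t⌋₊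
    · have ha : aFloor t N = true := by simp [aFloor, h]
      rw [ha]
      simp [h]
    · have ha : aFloor t N = false := by simp [aFloor, h]
      rw [ha]
      rcases floor_step t h0 h1 N with h2 | h2
      · exact absurd h2 h
      · simp [h2]

lemma tendsto_floor_div (t : ℝ) (h0 : 0 ≤ t) :
    Tendsto (fun N : ℕ => (⌊(N:ℝ) * t⌋₊ : ℝ) / N) atTop (nhds t) := by
  have hlow : Tendsto (fun N : ℕ => t - 1/(N:ℝ)) atTop (nhds (t - 0)) :=
    tendsto_const_nhds.sub tendsto_one_div_atTop_nhds_zero_nat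
  rw [sub_zero] at hlow
  refine tendsto_of_tendsto_of_tendsto_of_le_of_le' hlow tendsto_const_nhds ?_ ?_
  · filter_upwards [Filter.eventually_ge_atTop 1] with N hN
    have hN0 : (0:ℝ) < (N:ℝ) := by exact_mod_cast hN
    have h2 : (N:ℝ) * t - 1 < (⌊(N:ℝ) * t⌋₊ : ℝ) := Nat.sub_one_lt_floor _
    have heq : t - 1/(N:ℝ) = ((N:ℝ) * t - 1)/(N:ℝ) := by field_simp
    rw [heq]
    exact (div_le_div_iff_of_pos_right hN0).mpr (le_of_lt h2)
  · filter_upwards [Filter.eventually_ge_atTop 1] with N hN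
    have hN0 : (0:ℝ) < (N:ℝ) := by exact_mod_cast hN
    have h2 : (⌊(N:ℝ) * t⌋₊ : ℝ) ≤ (N:ℝ) * t := Nat.floor_le (by positivity)
    rw [div_le_iff₀ hN0]
    nlinarith
def aLog : ℕ → Bool := fun m => decide (Nat.log 2 (m+1) % 2 = 0)

lemma cF_Ico (a : ℕ → Bool) (n₁ n₂ : ℕ) (h : n₁ ≤ n₂) :
    cF a n₂ = cF a n₁ + ((Finset.Ico n₁ n₂).filter fun m => a m = false).card := by
  unfold cF
  rw [Finset.range_eq_Ico,
      ← Finset.Ico_union_Ico_eq_Ico (Nat.zero_le n₁) h, Finset.filter_union,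
      Finset.card_union_of_disjoint]
  rw [Finset.range_eq_Ico]
  exact Finset.disjoint_filter_filter (p := fun m => a m = false) (q := fun m => a m = false) (Finset.Ico_disjoint_Ico_consecutive 0 n₁ n₂)

lemma aLog_step (J : ℕ) :
    cF aLog (2^(J+1) - 1) = cF aLog (2^J - 1) + (if J % 2 = 1 then 2^J else 0) := by
  have h1 : (1:ℕ) ≤ 2^J := Nat.one_le_two_pow
  have h2 : (2:ℕ)^(J+1) = 2 * 2^J := by rw [pow_succ]; ring
  have hle : 2^J - 1 ≤ 2^(J+1) - 1 := by omega
  rw [cF_Ico aLog (2^J - 1) (2^(J+1) - 1) hle]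
  congr 1
  have hmem : ∀ m ∈ Finset.Ico (2^J - 1) (2^(J+1) - 1), Nat.log 2 (m+1) = J := by
    intro m hm
    rw [Finset.mem_Ico] at hm
    exact Nat.log_eq_of_pow_le_of_lt_pow (by omega) (by omega)
  by_cases hJ : J % 2 = 1
  · rw [if_pos hJ]
    rw [Finset.filter_true_of_mem]
    · rw [Nat.card_Ico]; omega
    · intro m hm
      have := hmem m hm
      simp [aLog, this]
      omega
  · rw [if_neg hJ]
    rw [Finset.filter_false_of_mem]
    · simp
    · intro m hm
      have := hmem m hm
      simp [aLog, this]
      omega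

lemma S_odd : ∀ J : ℕ, 3 * cF aLog (2^(2*J+1) - 1) + 2 = 2 * 4^J := by
  intro J
  induction J with
  | zero =>
    have : cF aLog (2^(2*0+1) - 1) = cF aLog 1 := by norm_num
    rw [this]
    have h0 : aLog 0 = true := by simp [aLog]
    have h1 : cF aLog 1 = 0 := by
      simp [cF, Finset.filter_singleton, h0]
    rw [h1]
    norm_num
  | succ J ih =>
    have e1 : 2*(J+1)+1 = (2*J+2)+1 := by omega
    have e2 : (2:ℕ)^(2*J+2) = 4 * 4^J := by
      rw [pow_succ, pow_succ, pow_mul]; norm_num; ring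
    have e3 : (2:ℕ)^(2*J+1) = 2 * 4^J := by
      rw [pow_succ, pow_mul]; norm_num; ring
    have hstep2 := aLog_step (2*J+2)
    have hstep1 := aLog_step (2*J+1)
    rw [if_neg (by omega)] at hstep2
    rw [if_pos (by omega)] at hstep1
    have e4 : 2*J+1+1 = 2*J+2 := by omega
    rw [e4] at hstep1
    have e5 : 2*J+2+1 = 2*(J+1)+1 := by omega
    rw [e5] at hstep2
    have e6 : (4:ℕ)^(J+1) = 4 * 4^J := by ring
    omega

lemma S_even (J : ℕ) : 3 * cF aLog (2^(2*J+2) - 1) + 2 = 8 * 4^J := by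
  have hstep1 := aLog_step (2*J+1)
  rw [if_pos (by omega)] at hstep1
  have e4 : 2*J+1+1 = 2*J+2 := by omega
  rw [e4] at hstep1
  have e3 : (2:ℕ)^(2*J+1) = 2 * 4^J := by
    rw [pow_succ, pow_mul]; norm_num; ring
  have := S_odd J
  omega
lemma tend_frac (A B C D : ℝ) (hC : 0 < C) :
    Tendsto (fun J : ℕ => (A*(4:ℝ)^J + B)/(C*(4:ℝ)^J + D)) atTop (nhds (A/C)) := by
  have hx : Tendsto (fun J : ℕ => ((1:ℝ)/4)^J) atTop (nhds 0) :=
    tendsto_pow_atTop_nhds_zero_of_lt_one (by norm_num) (by norm_num)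
  have h1 : Tendsto (fun J : ℕ => (A + B*((1/4:ℝ))^J)/(C + D*((1/4:ℝ))^J)) atTop
      (nhds ((A + B*0)/(C + D*0))) :=
    Tendsto.div (tendsto_const_nhds.add (hx.const_mul B))
      (tendsto_const_nhds.add (hx.const_mul D)) (by simp [ne_of_gt hC])
  rw [mul_zero, add_zero, mul_zero, add_zero] at h1
  refine h1.congr' ?_
  have hxt : Tendsto (fun J : ℕ => (4:ℝ)^J) atTop atTop :=
    tendsto_pow_atTop_atTop_of_one_lt (by norm_num)
  filter_upwards [hxt.eventually_ge_atTop ((|D|+1)/C)] with J hJ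
  have hx0 : (0:ℝ) < 4^J := by positivity
  have hden : 0 < C*(4:ℝ)^J + D := by
    have h2 : C * ((|D|+1)/C) ≤ C * (4:ℝ)^J := mul_le_mul_of_nonneg_left hJ hC.le
    rw [mul_div_cancel₀ _ (ne_of_gt hC)] at h2
    have := neg_abs_le D
    linarith
  have hu : ((1:ℝ)/4)^J = 1/((4:ℝ)^J) := by rw [div_pow, one_pow]
  have hux : (1/((4:ℝ)^J)) * (4:ℝ)^J = 1 := by field_simp
  have hden2 : 0 < C + D*((1/4:ℝ))^J := by
    rw [hu]
    have e2 : C + D*(1/((4:ℝ)^J)) = (C*(4:ℝ)^J + D)/((4:ℝ)^J) := by field_simp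
    rw [e2]
    exact div_pos hden hx0
  rw [div_eq_div_iff (ne_of_gt hden2) (ne_of_gt hden)]
  rw [hu]
  linear_combination (B*C - A*D) * hux

lemma cast_pow_odd (J : ℕ) : (((2:ℕ)^(2*J+1) - 1 : ℕ) : ℝ) = 2*(4:ℝ)^J - 1 := by
  have h1 : (1:ℕ) ≤ 2^(2*J+1) := Nat.one_le_two_pow
  have h2 : (2:ℝ)^(2*J+1) = 2*(4:ℝ)^J := by
    rw [pow_succ, pow_mul]; norm_num [mul_comm]
  rw [Nat.cast_sub h1]
  push_cast
  rw [h2]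

lemma cast_pow_even (J : ℕ) : (((2:ℕ)^(2*J+2) - 1 : ℕ) : ℝ) = 4*(4:ℝ)^J - 1 := by
  have h1 : (1:ℕ) ≤ 2^(2*J+2) := Nat.one_le_two_pow
  have h2 : (2:ℝ)^(2*J+2) = 4*(4:ℝ)^J := by
    rw [pow_succ, pow_succ, pow_mul]; norm_num [mul_comm]; ring
  rw [Nat.cast_sub h1]
  push_cast
  rw [h2]

lemma tend13 : Tendsto (fun J : ℕ => (cF aLog (2^(2*J+1) - 1) : ℝ) / ((2^(2*J+1) - 1 : ℕ) : ℝ))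
    atTop (nhds (1/3)) := by
  have h := tend_frac (2/3) (-2/3) 2 (-1) (by norm_num)
  have he : (2:ℝ)/3/2 = 1/3 := by norm_num
  rw [he] at h
  refine h.congr fun J => ?_
  have hc : (cF aLog (2^(2*J+1) - 1) : ℝ) = (2*(4:ℝ)^J - 2)/3 := by
    have h2 := congrArg (fun n : ℕ => (n:ℝ)) (S_odd J)
    push_cast at h2
    linarith
  rw [hc, cast_pow_odd J]
  have h1 : (1:ℝ) ≤ (4:ℝ)^J := one_le_pow₀ (by norm_num)
  have hne : 2*(4:ℝ)^J - 1 ≠ 0 := by linarith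
  have hne2 : (2:ℝ)*(4:ℝ)^J + -1 ≠ 0 := by linarith
  rw [div_div, div_eq_div_iff hne2 (by positivity)]
  ring

lemma tend23 : Tendsto (fun J : ℕ => (cF aLog (2^(2*J+2) - 1) : ℝ) / ((2^(2*J+2) - 1 : ℕ) : ℝ))
    atTop (nhds (2/3)) := by
  have h := tend_frac (8/3) (-2/3) 4 (-1) (by norm_num)
  have he : (8:ℝ)/3/4 = 2/3 := by norm_num
  rw [he] at h
  refine h.congr fun J => ?_
  have hc : (cF aLog (2^(2*J+2) - 1) : ℝ) = (8*(4:ℝ)^J - 2)/3 := by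
    have h2 := congrArg (fun n : ℕ => (n:ℝ)) (S_even J)
    push_cast at h2
    linarith
  rw [hc, cast_pow_even J]
  have h1 : (1:ℝ) ≤ (4:ℝ)^J := one_le_pow₀ (by norm_num)
  have hne : 4*(4:ℝ)^J - 1 ≠ 0 := by linarith
  have hne2 : (4:ℝ)*(4:ℝ)^J + -1 ≠ 0 := by linarith
  rw [div_div, div_eq_div_iff hne2 (by positivity)]
  ring

theorem stmt3' (k : ℕ) (hk : 2 ≤ k) :
    (∀ r : ℝ, r ∈ Set.Icc ((k + 1 : ℝ) / (2 * k + 3)) ((k + 2 : ℝ) / (2 * k + 3)) →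
      ∃ i ∈ sigmaSet k, hasFreqZero i r) ∧
    ∃ i ∈ sigmaSet k, ¬ ∃ r : ℝ, hasFreqZero i r := by
  have hLpos : (0:ℝ) < 2*(k:ℝ)+3 := by positivity
  constructor
  · intro r hr
    set t : ℝ := (2*(k:ℝ)+3)*r - ((k:ℝ)+1) with ht
    have h0 : 0 ≤ t := by
      have := (div_le_iff₀ hLpos).mp hr.1
      rw [ht]; nlinarith
    have h1 : t ≤ 1 := by
      have := (le_div_iff₀ hLpos).mp hr.2
      rw [ht]; nlinarith
    refine ⟨seqOf k (aFloor t), seqOf_mem k (aFloor t), ?_⟩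
    have hc : Tendsto (fun N : ℕ => (cF (aFloor t) N : ℝ) / N) atTop (nhds t) :=
      (tendsto_floor_div t h0).congr fun N => by rw [cF_aFloor t h0 h1 N]
    have hfreq := freq_of_cF k (aFloor t) t hc
    have heq : ((k:ℝ) + 1 + t) / (2 * (k:ℝ) + 3) = r := by
      rw [ht]
      field_simp
      ring
    rw [← heq]
    exact hfreq
  · refine ⟨seqOf k aLog, seqOf_mem k aLog, ?_⟩
    rintro ⟨r, hfreq⟩
    have hmul : Tendsto (fun N : ℕ => (2*k+3)*N) atTop atTop := by
      apply Filter.tendsto_atTop_atTop.mpr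
      intro b
      exact ⟨b, fun n hn => le_trans hn (Nat.le_mul_of_pos_left n (by omega))⟩
    have hcomp : Tendsto (fun N : ℕ =>
        (countZeros (seqOf k aLog) ((2*k+3)*N) : ℝ) / (((2*k+3)*N : ℕ) : ℝ))
        atTop (nhds r) := hfreq.comp hmul
    have hF : ∀ N : ℕ, countZeros (seqOf k aLog) ((2*k+3)*N) = (k+1)*N + cF aLog N := by
      intro N
      have h2 := countZeros_formula k aLog ((2*k+3)*N)
      rw [Nat.mul_div_cancel_left N (show 0 < 2*k+3 by omega), Nat.mul_mod_right] at h2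
      simpa [wz] using h2
    have hct : Tendsto (fun N : ℕ => (cF aLog N : ℝ)/N) atTop
        (nhds ((2*(k:ℝ)+3)*r - ((k:ℝ)+1))) := by
      have h2 : Tendsto (fun N : ℕ => (2*(k:ℝ)+3) *
          ((countZeros (seqOf k aLog) ((2*k+3)*N) : ℝ) / (((2*k+3)*N : ℕ) : ℝ)) - ((k:ℝ)+1))
          atTop (nhds ((2*(k:ℝ)+3)*r - ((k:ℝ)+1))) :=
        (hcomp.const_mul _).sub tendsto_const_nhds
      refine h2.congr' ?_
      filter_upwards [Filter.eventually_ge_atTop 1] with N hN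
      rw [hF N]
      have hN0 : (0:ℝ) < (N:ℝ) := by exact_mod_cast hN
      push_cast
      field_simp
      ring
    have hpsi1 : StrictMono (fun J : ℕ => 2^(2*J+1) - 1) := by
      intro a b hab
      have h2 : (2:ℕ)^(2*a+1) < 2^(2*b+1) := Nat.pow_lt_pow_right (by norm_num) (by omega)
      have h3 : (1:ℕ) ≤ 2^(2*a+1) := Nat.one_le_two_pow
      simp only
      omega
    have hpsi2 : StrictMono (fun J : ℕ => 2^(2*J+2) - 1) := by
      intro a b hab
      have h2 : (2:ℕ)^(2*a+2) < 2^(2*b+2) := Nat.pow_lt_pow_right (by norm_num) (by omega)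
      have h3 : (1:ℕ) ≤ 2^(2*a+2) := Nat.one_le_two_pow
      simp only
      omega
    have h13 : (2*(k:ℝ)+3)*r - ((k:ℝ)+1) = 1/3 :=
      tendsto_nhds_unique (hct.comp hpsi1.tendsto_atTop) tend13
    have h23 : (2*(k:ℝ)+3)*r - ((k:ℝ)+1) = 2/3 :=
      tendsto_nhds_unique (hct.comp hpsi2.tendsto_atTop) tend23
    rw [h13] at h23
    norm_num at h23

end S3

theorem stmt3 (k : ℕ) (hk : 2 ≤ k) :
    (∀ r : ℝ, r ∈ Set.Icc ((k + 1 : ℝ) / (2 * k + 3)) ((k + 2 : ℝ) / (2 * k + 3)) →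
      ∃ i ∈ sigmaSet k, hasFreqZero i r) ∧
    ∃ i ∈ sigmaSet k, ¬ ∃ r : ℝ, hasFreqZero i r := S3.stmt3' k hk
end
end

section
/- Let λ ∈ (1/2, 1) and k ∈ ℕ satisfy 0 < 2λ − 1 < λ^{k−1}(1−λ). Let S₀(x) = λx, S₁(x) = λ(x+1), I = [0, λ/(1−λ)]. Then S₀(I) ∩ S₁∘S₀^{k−2}∘S₁(I) = ∅ and S₁(I) ∩ S₀∘S₁^{k−2}∘S₀(I) = ∅. Consequently, 10^{k−1} is the only word w of length k starting with 1 such that S_w(I) ∩ S₀(I) ≠ ∅, and 01^{k−1} is the only word of length k starting with 0 such that S_w(I) ∩ S₁(I) ≠ ∅. -/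
noncomputable section

/-- `S₀(x) = λx`, `S₁(x) = λ(x+1)`; `false` codes the digit 0 and `true` the digit 1. -/
def Smap (l : ℝ) (b : Bool) : ℝ → ℝ := fun x => l * (x + if b then 1 else 0)

/-- `S_w = S_{w₁} ∘ ⋯ ∘ S_{w_k}` for a finite word `w`. -/
def Sword (l : ℝ) (w : List Bool) : ℝ → ℝ := w.foldr (fun b f => Smap l b ∘ f) id

lemma sword_nil (l x : ℝ) : Sword l [] x = x := rfl

lemma sword_cons (l : ℝ) (b : Bool) (w : List Bool) (x : ℝ) :
    Sword l (b :: w) x = l * (Sword l w x + if b then 1 else 0) := rfl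

lemma smap_eq_sword (l : ℝ) (b : Bool) : Smap l b = Sword l [b] := rfl

lemma sword_affine (l : ℝ) (w : List Bool) : ∀ x : ℝ,
    Sword l w x = l ^ w.length * x + Sword l w 0 := by
  induction w with
  | nil => intro x; simp [sword_nil]
  | cons b w ih =>
    intro x
    rw [sword_cons, sword_cons, ih x, ih 0]
    simp only [List.length_cons, pow_succ]
    ring

lemma sword_image (l : ℝ) (hl : 0 < l) (w : List Bool) {a b : ℝ} :
    Sword l w '' Set.Icc a b = Set.Icc (Sword l w a) (Sword l w b) := by
  have h : Sword l w = (l ^ w.length * · + Sword l w 0) := funext (sword_affine l w)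
  rw [sword_affine l w a, sword_affine l w b,
    show Sword l w '' Set.Icc a b = (l ^ w.length * · + Sword l w 0) '' Set.Icc a b from
      congrArg (fun g => g '' Set.Icc a b) h,
    Set.image_affine_Icc' (pow_pos hl _)]

lemma sword_nonneg (l : ℝ) (hl : 0 ≤ l) (w : List Bool) : 0 ≤ Sword l w 0 := by
  induction w with
  | nil => simp [sword_nil]
  | cons b w ih =>
    rw [sword_cons]
    have he : (0:ℝ) ≤ if b then 1 else 0 := by split <;> norm_num
    exact mul_nonneg hl (by linarith)

lemma sword_upper (l : ℝ) (hl0 : 0 ≤ l) (hl1 : l ≤ 1) (w : List Bool) :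
    (1 - l) * Sword l w 0 ≤ l - l ^ (w.length + 1) := by
  induction w with
  | nil => simp [sword_nil]
  | cons b w ih =>
    rw [sword_cons]
    have he : (if b then (1:ℝ) else 0) ≤ 1 := by split <;> norm_num
    have he0 : (0:ℝ) ≤ if b then 1 else 0 := by split <;> norm_num
    have ht : 0 ≤ Sword l w 0 := sword_nonneg l hl0 w
    simp only [List.length_cons]
    have hp : l ^ (w.length + 1 + 1) = l * l ^ (w.length + 1) := by ring
    rw [hp]
    have h1l : (0:ℝ) ≤ 1 - l := by linarith
    nlinarith [mul_le_mul_of_nonneg_left ih hl0,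
      mul_le_mul_of_nonneg_left he (mul_nonneg h1l hl0)]

lemma sword_lower_true (l : ℝ) (hl0 : 0 ≤ l) (hl1 : l ≤ 1) (w : List Bool)
    (hw : true ∈ w) : l ^ w.length ≤ Sword l w 0 := by
  induction w with
  | nil => simp at hw
  | cons b w ih =>
    rw [sword_cons]
    have ht : 0 ≤ Sword l w 0 := sword_nonneg l hl0 w
    simp only [List.length_cons]
    have hp : l ^ (w.length + 1) = l * l ^ w.length := by ring
    rw [hp]
    rcases List.mem_cons.mp hw with hb | hw'
    · subst hb
      simp only [if_pos]
      have h1 : l ^ w.length ≤ 1 := pow_le_one₀ hl0 hl1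
      nlinarith [mul_le_mul_of_nonneg_left h1 hl0, mul_nonneg hl0 ht]
    · have := ih hw'
      have he0 : (0:ℝ) ≤ if b then 1 else 0 := by split <;> norm_num
      nlinarith

lemma sword_upper_false (l : ℝ) (hl0 : 0 ≤ l) (hl1 : l ≤ 1) (w : List Bool)
    (hw : false ∈ w) : (1 - l) * Sword l w 0 ≤ l - l ^ w.length := by
  induction w with
  | nil => simp at hw
  | cons b w ih =>
    rw [sword_cons]
    simp only [List.length_cons]
    have hp : l ^ (w.length + 1) = l * l ^ w.length := by ring
    rw [hp]
    have ht : 0 ≤ Sword l w 0 := sword_nonneg l hl0 w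
    rcases List.mem_cons.mp hw with hb | hw'
    · have hb' : b = false := by simpa using hb.symm
      subst hb'
      simp only [Bool.false_eq_true, if_false, add_zero]
      have h1 := sword_upper l hl0 hl1 w
      have h2 : l ^ (w.length + 1) ≤ l := by
        calc l ^ (w.length + 1) ≤ l ^ 1 := pow_le_pow_of_le_one hl0 hl1 (by omega)
        _ = l := pow_one l
      rw [show l ^ (w.length + 1) = l * l ^ w.length by ring] at h2 h1
      have h1l : (0:ℝ) ≤ 1 - l := by linarith
      nlinarith [mul_le_mul_of_nonneg_left h1 hl0, mul_le_mul_of_nonneg_left h2 h1l]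
    · have h1 := ih hw'
      have he : (if b then (1:ℝ) else 0) ≤ 1 := by split <;> norm_num
      have h1l : (0:ℝ) ≤ 1 - l := by linarith
      nlinarith [mul_le_mul_of_nonneg_left h1 hl0,
        mul_le_mul_of_nonneg_left he (mul_nonneg h1l hl0)]

theorem stmt13 (l : ℝ) (k : ℕ) (hk : 2 ≤ k) (hl0 : 1 / 2 < l) (hl1 : l < 1)
    (hΛ : 2 * l - 1 < l ^ (k - 1) * (1 - l)) :
    (Smap l false '' Set.Icc 0 (l / (1 - l))) ∩
        (Sword l (true :: (List.replicate (k - 2) false ++ [true])) ''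
          Set.Icc 0 (l / (1 - l))) = ∅ ∧
    (Smap l true '' Set.Icc 0 (l / (1 - l))) ∩
        (Sword l (false :: (List.replicate (k - 2) true ++ [false])) ''
          Set.Icc 0 (l / (1 - l))) = ∅ ∧
    (∀ w : List Bool, w.length = k → w.head? = some true →
      ((Sword l w '' Set.Icc 0 (l / (1 - l))) ∩
        (Smap l false '' Set.Icc 0 (l / (1 - l)))).Nonempty →
      w = true :: List.replicate (k - 1) false) ∧
    (∀ w : List Bool, w.length = k → w.head? = some false →
      ((Sword l w '' Set.Icc 0 (l / (1 - l))) ∩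
        (Smap l true '' Set.Icc 0 (l / (1 - l)))).Nonempty →
      w = false :: List.replicate (k - 1) true) := by
  obtain ⟨m, rfl⟩ : ∃ m, k = m + 2 := ⟨k - 2, by omega⟩
  have hl : (0:ℝ) < l := by linarith
  have h1l : (0:ℝ) < 1 - l := by linarith
  have hm2 : m + 2 - 2 = m := by omega
  have hm1 : m + 2 - 1 = m + 1 := by omega
  rw [hm1] at hΛ
  rw [hm2, hm1]
  set c := l / (1 - l) with hc
  have hc0 : 0 ≤ c := le_of_lt (div_pos hl h1l)
  have hcl : c * (1 - l) = l := div_mul_cancel₀ l h1l.ne'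
  -- key inequality 1 : l * c < l^(m+2) + l
  have key1 : l * c < l ^ (m + 2) + l := by
    have h : l * c * (1 - l) < (l ^ (m + 2) + l) * (1 - l) := by
      rw [mul_assoc, hcl]
      have hmul := mul_lt_mul_of_pos_left hΛ hl
      have hp : l ^ (m + 2) = l * l ^ (m + 1) := by ring
      rw [hp]
      nlinarith
    exact lt_of_mul_lt_mul_right h h1l.le
  -- key inequality 2
  have key2 : ∀ t : ℝ, (1 - l) * t ≤ l - l ^ (m + 1) → l * t + l ^ (m + 2) * c < l := by
    intro t ht
    have h : (l * t + l ^ (m + 2) * c) * (1 - l) < l * (1 - l) := by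
      have h2 : l ^ (m + 2) * c * (1 - l) = l ^ (m + 2) * l := by
        rw [mul_assoc, hcl]
      have hmul := mul_lt_mul_of_pos_left hΛ hl
      have hp : l ^ (m + 2) = l * l ^ (m + 1) := by ring
      nlinarith
    exact lt_of_mul_lt_mul_right h h1l.le
  have himg : ∀ w : List Bool, Sword l w '' Set.Icc 0 c
      = Set.Icc (Sword l w 0) (l ^ w.length * c + Sword l w 0) := by
    intro w
    rw [sword_image l hl w, sword_affine l w c]
  -- Helper facts about the two special words' tails
  have hmemT : true ∈ List.replicate m false ++ [true] := by simp
  have hmemF : false ∈ List.replicate m true ++ [false] := by simp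
  have hlenT : (List.replicate m false ++ [true]).length = m + 1 := by simp
  have hlenF : (List.replicate m true ++ [false]).length = m + 1 := by simp
  -- lower bound for words whose tail contains true
  have lower_bound : ∀ v : List Bool, v.length = m + 1 → true ∈ v →
      l ^ (m + 2) + l ≤ Sword l (true :: v) 0 := by
    intro v hv htv
    have h1 := sword_lower_true l hl.le hl1.le v htv
    rw [hv] at h1
    rw [sword_cons]
    simp only [if_pos]
    have hp : l ^ (m + 2) = l * l ^ (m + 1) := by ring
    nlinarith
  -- upper bound for words whose tail contains false
  have upper_bound : ∀ v : List Bool, v.length = m + 1 → false ∈ v →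
      l ^ (m + 2 : ℕ) * c + Sword l (false :: v) 0 < l := by
    intro v hv hfv
    have h1 := sword_upper_false l hl.le hl1.le v hfv
    rw [hv] at h1
    rw [sword_cons]
    simp only [Bool.false_eq_true, if_false, add_zero]
    have := key2 (Sword l v 0) h1
    linarith
  refine ⟨?_, ?_, ?_, ?_⟩
  · -- part 1
    rw [smap_eq_sword, himg, himg]
    apply Set.eq_empty_iff_forall_notMem.mpr
    rintro x ⟨⟨-, hx1⟩, hx2, -⟩
    have h0 : Sword l [false] 0 = 0 := by norm_num [sword_cons, sword_nil]
    have hlen1 : ([false] : List Bool).length = 1 := rfl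
    rw [h0, hlen1, pow_one, add_zero] at hx1
    have hlen : (true :: (List.replicate m false ++ [true])).length = m + 2 := by simp
    have := lower_bound _ hlenT hmemT
    linarith
  · -- part 2
    rw [smap_eq_sword, himg, himg]
    apply Set.eq_empty_iff_forall_notMem.mpr
    rintro x ⟨⟨hx1, -⟩, -, hx2⟩
    have h0 : Sword l [true] 0 = l := by norm_num [sword_cons, sword_nil]
    rw [h0] at hx1
    have hlen : (false :: (List.replicate m true ++ [false])).length = m + 2 := by
      simp
    rw [hlen] at hx2
    have := upper_bound _ hlenF hmemF
    linarith
  · -- part 3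
    rintro w hwlen hwhead ⟨x, hx1, hx2⟩
    cases w with
    | nil => simp at hwhead
    | cons b v =>
      have hb : b = true := by simpa using hwhead
      subst hb
      have hv : v.length = m + 1 := by simpa using hwlen
      suffices hall : ∀ y ∈ v, y = false by
        have : v = List.replicate v.length false := List.eq_replicate_length.mpr hall
        rw [hv] at this
        rw [this]
      intro y hy
      by_contra hne
      have hyt : y = true := by
        cases y
        · exact absurd rfl hne
        · rfl
      subst hyt
      rw [smap_eq_sword, himg] at hx2
      rw [himg] at hx1
      obtain ⟨hx1a, -⟩ := hx1
      obtain ⟨-, hx2b⟩ := hx2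
      have h0 : Sword l [false] 0 = 0 := by norm_num [sword_cons, sword_nil]
      have hlen1 : ([false] : List Bool).length = 1 := rfl
      rw [h0, hlen1, pow_one, add_zero] at hx2b
      have := lower_bound v hv hy
      linarith
  · -- part 4
    rintro w hwlen hwhead ⟨x, hx1, hx2⟩
    cases w with
    | nil => simp at hwhead
    | cons b v =>
      have hb : b = false := by simpa using hwhead
      subst hb
      have hv : v.length = m + 1 := by simpa using hwlen
      suffices hall : ∀ y ∈ v, y = true by
        have : v = List.replicate v.length true := List.eq_replicate_length.mpr hall
        rw [hv] at this
        rw [this]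
      intro y hy
      by_contra hne
      have hyt : y = false := by
        cases y
        · rfl
        · exact absurd rfl hne
      subst hyt
      rw [smap_eq_sword, himg] at hx2
      rw [himg] at hx1
      obtain ⟨-, hx1b⟩ := hx1
      obtain ⟨hx2a, -⟩ := hx2
      have h0 : Sword l [true] 0 = l := by norm_num [sword_cons, sword_nil]
      rw [h0] at hx2a
      have hlen : (false :: v).length = m + 2 := by simp [hv]
      rw [hlen] at hx1b
      have := upper_bound v hv hy
      linarith
end
end

section
/- Let ν and μ be finite Borel measures on a compact interval I ⊆ ℝ, and suppose there exist constants C₁, C₂ > 0 and exponents δ₁, δ₂ > 1/2 such that μ(J) ≤ C₁|J|^{δ₁} and ν(J) ≤ C₂|J|^{δ₂} for every subinterval J ⊆ I. Then there exists C₃ > 0 such that the convolution ν*μ satisfies (ν*μ)(J₁) ≤ C₃|J₁|^{δ₁+δ₂−1} for every interval J₁ ⊆ I + I. -/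
open MeasureTheory Pointwise ENNReal

noncomputable section

/-- Trimming lemma: if μ vanishes off [a,b] and satisfies the Hölder bound on
subintervals of [a,b], then any interval of length ≤ L has measure ≤ C·L^δ. -/
lemma trim_aux (a b : ℝ) (μ : Measure ℝ) (hμs : μ (Set.Icc a b)ᶜ = 0)
    (C δ : ℝ) (hC : 0 < C) (hδ : 0 ≤ δ)
    (hμ : ∀ c d : ℝ, c ≤ d → Set.Icc c d ⊆ Set.Icc a b →
      μ (Set.Icc c d) ≤ ENNReal.ofReal (C * (d - c) ^ δ))
    (L s t : ℝ) (hL : 0 ≤ L) (h : t - s ≤ L) :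
    μ (Set.Icc s t) ≤ ENNReal.ofReal (C * L ^ δ) := by
  have hsub : Set.Icc s t ⊆ (Set.Icc (max s a) (min t b)) ∪ (Set.Icc a b)ᶜ := by
    intro x hx
    by_cases hxab : x ∈ Set.Icc a b
    · left
      exact ⟨max_le hx.1 hxab.1, le_min hx.2 hxab.2⟩
    · right; exact hxab
  have h1 : μ (Set.Icc s t) ≤ μ (Set.Icc (max s a) (min t b)) + μ (Set.Icc a b)ᶜ :=
    (measure_mono hsub).trans (measure_union_le _ _)
  rw [hμs, add_zero] at h1
  refine h1.trans ?_
  rcases le_or_gt (max s a) (min t b) with hle | hlt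
  · have hss : Set.Icc (max s a) (min t b) ⊆ Set.Icc a b :=
      Set.Icc_subset_Icc (le_max_right _ _) (min_le_right _ _)
    refine (hμ _ _ hle hss).trans (ENNReal.ofReal_le_ofReal ?_)
    have h2 : min t b - max s a ≤ L := by
      have := min_le_left t b
      have := le_max_left s a
      linarith
    have h3 : 0 ≤ min t b - max s a := by linarith
    exact mul_le_mul_of_nonneg_left (Real.rpow_le_rpow h3 h2 hδ) hC.le
  · rw [Set.Icc_eq_empty_of_lt hlt, measure_empty]
    exact zero_le

/-- Covering an interval of length (n+1)·ℓ by n+1 intervals of length ℓ. -/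
lemma cover_aux (ν : Measure ℝ) (B : ℝ≥0∞) (ℓ : ℝ)
    (hB : ∀ s : ℝ, ν (Set.Icc s (s + ℓ)) ≤ B) :
    ∀ (n : ℕ) (t : ℝ), ν (Set.Icc t (t + (n + 1) * ℓ)) ≤ (n + 1 : ℕ) * B := by
  intro n
  induction n with
  | zero => intro t; simpa using hB t
  | succ k ih =>
    intro t
    push_cast
    have heq : t + ((k : ℝ) + 1 + 1) * ℓ = (t + ((k : ℝ) + 1) * ℓ) + ℓ := by ring
    have hsub : Set.Icc t (t + ((k : ℝ) + 1 + 1) * ℓ) ⊆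
        Set.Icc t (t + ((k : ℝ) + 1) * ℓ) ∪
          Set.Icc (t + ((k : ℝ) + 1) * ℓ) ((t + ((k : ℝ) + 1) * ℓ) + ℓ) := by
      rw [heq]
      exact Set.Icc_subset_Icc_union_Icc
    calc ν (Set.Icc t (t + ((k : ℝ) + 1 + 1) * ℓ))
        ≤ ν (Set.Icc t (t + ((k : ℝ) + 1) * ℓ)) +
            ν (Set.Icc (t + ((k : ℝ) + 1) * ℓ) ((t + ((k : ℝ) + 1) * ℓ) + ℓ)) :=
          (measure_mono hsub).trans (measure_union_le _ _)
      _ ≤ (k + 1 : ℕ) * B + B := by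
            refine add_le_add ?_ (hB _)
            have := ih t
            push_cast at this ⊢
            exact this
      _ = ((k : ℝ≥0∞) + 1 + 1) * B := by push_cast; ring

theorem stmt16 (a b : ℝ) (hab : a ≤ b)
    (μ ν : Measure ℝ) [IsFiniteMeasure μ] [IsFiniteMeasure ν]
    (hμs : μ (Set.Icc a b)ᶜ = 0) (hνs : ν (Set.Icc a b)ᶜ = 0)
    (C₁ C₂ δ₁ δ₂ : ℝ) (hC₁ : 0 < C₁) (hC₂ : 0 < C₂)
    (hδ₁ : 1 / 2 < δ₁) (hδ₂ : 1 / 2 < δ₂)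
    (hμ : ∀ c d : ℝ, c ≤ d → Set.Icc c d ⊆ Set.Icc a b →
      μ (Set.Icc c d) ≤ ENNReal.ofReal (C₁ * (d - c) ^ δ₁))
    (hν : ∀ c d : ℝ, c ≤ d → Set.Icc c d ⊆ Set.Icc a b →
      ν (Set.Icc c d) ≤ ENNReal.ofReal (C₂ * (d - c) ^ δ₂)) :
    ∃ C₃ : ℝ, 0 < C₃ ∧ ∀ c d : ℝ, c ≤ d →
      Set.Icc c d ⊆ Set.Icc a b + Set.Icc a b →
        (ν.prod μ).map (fun p : ℝ × ℝ => p.1 + p.2) (Set.Icc c d) ≤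
          ENNReal.ofReal (C₃ * (d - c) ^ (δ₁ + δ₂ - 1)) := by
  have hba : (0:ℝ) ≤ b - a := by linarith
  refine ⟨5 * C₁ * C₂ * (b - a) + 1, by positivity, fun c d hcd hsub => ?_⟩
  have hδ₁0 : 0 ≤ δ₁ := by linarith
  have hδ₂0 : 0 ≤ δ₂ := by linarith
  -- rewrite the mapped measure as an integral
  have hmap : (ν.prod μ).map (fun p : ℝ × ℝ => p.1 + p.2) (Set.Icc c d) =
      ∫⁻ x, μ (Set.Icc (c - x) (d - x)) ∂ν := by
    rw [Measure.map_apply (by measurability) measurableSet_Icc,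
      Measure.prod_apply (by measurability)]
    refine lintegral_congr fun x => ?_
    congr 1
    ext y
    simp only [Set.mem_preimage, Set.mem_Icc]
    constructor <;> rintro ⟨h1, h2⟩ <;> constructor <;> linarith
  -- pointwise bound by an indicator
  have hbound : ∀ x, μ (Set.Icc (c - x) (d - x)) ≤
      (Set.Icc (c - b) (d - a)).indicator
        (fun _ => ENNReal.ofReal (C₁ * (d - c) ^ δ₁)) x := by
    intro x
    by_cases hx : x ∈ Set.Icc (c - b) (d - a)
    · rw [Set.indicator_of_mem hx]
      exact trim_aux a b μ hμs C₁ δ₁ hC₁ hδ₁0 hμ (d - c) (c - x) (d - x)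
        (by linarith) (by linarith)
    · rw [Set.indicator_of_notMem hx]
      have hss : Set.Icc (c - x) (d - x) ⊆ (Set.Icc a b)ᶜ := by
        intro y hy hyab
        rw [Set.mem_Icc] at hy hyab
        exact hx ⟨by linarith [hy.1, hyab.2], by linarith [hy.2, hyab.1]⟩
      calc μ (Set.Icc (c - x) (d - x)) ≤ μ (Set.Icc a b)ᶜ := measure_mono hss
        _ = 0 := hμs
        _ ≤ _ := zero_le
  have key : (ν.prod μ).map (fun p : ℝ × ℝ => p.1 + p.2) (Set.Icc c d) ≤
      ENNReal.ofReal (C₁ * (d - c) ^ δ₁) * ν (Set.Icc (c - b) (d - a)) := by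
    rw [hmap]
    calc ∫⁻ x, μ (Set.Icc (c - x) (d - x)) ∂ν
        ≤ ∫⁻ x, (Set.Icc (c - b) (d - a)).indicator
            (fun _ => ENNReal.ofReal (C₁ * (d - c) ^ δ₁)) x ∂ν := lintegral_mono hbound
      _ = _ := lintegral_indicator_const measurableSet_Icc _
  rcases eq_or_lt_of_le hcd with heq | hlt
  · -- degenerate case c = d
    subst heq
    refine le_trans key ?_
    rw [sub_self, Real.zero_rpow (by linarith : δ₁ ≠ 0), mul_zero, ENNReal.ofReal_zero,
      zero_mul]
    exact zero_le
  · have hℓ : (0:ℝ) < d - c := by linarith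
    -- d - c ≤ 2 (b - a)
    have hd2 : d - c ≤ 2 * (b - a) := by
      rw [Set.Icc_add_Icc hab hab] at hsub
      have h := (Set.Icc_subset_Icc_iff hcd).mp hsub
      linarith [h.1, h.2]
    obtain ⟨m, hm_def⟩ : ∃ m : ℕ, m = ⌈(b - a) / (d - c)⌉₊ := ⟨_, rfl⟩
    set B := ENNReal.ofReal (C₂ * (d - c) ^ δ₂) with hB_def
    have hB : ∀ s : ℝ, ν (Set.Icc s (s + (d - c))) ≤ B := fun s =>
      trim_aux a b ν hνs C₂ δ₂ hC₂ hδ₂0 hν (d - c) s (s + (d - c)) hℓ.le (by linarith)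
    have hcov := cover_aux ν B (d - c) hB m (c - b)
    have hmle : b - a ≤ (m : ℝ) * (d - c) := by
      have h1 : (b - a) / (d - c) ≤ (m : ℝ) := by rw [hm_def]; exact Nat.le_ceil _
      have h2 := mul_le_mul_of_nonneg_right h1 hℓ.le
      rw [div_mul_cancel₀ _ hℓ.ne'] at h2
      exact h2
    have hsubI : Set.Icc (c - b) (d - a) ⊆
        Set.Icc (c - b) ((c - b) + ((m : ℝ) + 1) * (d - c)) :=
      Set.Icc_subset_Icc le_rfl (by nlinarith)
    have hν2 : ν (Set.Icc (c - b) (d - a)) ≤ (m + 1 : ℕ) * B :=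
      (measure_mono hsubI).trans (by push_cast at hcov ⊢; exact hcov)
    -- the real-number inequality
    have hP : (d - c) ^ δ₁ * (d - c) ^ δ₂ = (d - c) ^ (δ₁ + δ₂ - 1) * (d - c) := by
      rw [← Real.rpow_add hℓ, show δ₁ + δ₂ = (δ₁ + δ₂ - 1) + 1 by ring,
        Real.rpow_add_one hℓ.ne']
      norm_num
    have hPnn : (0:ℝ) ≤ (d - c) ^ (δ₁ + δ₂ - 1) := Real.rpow_nonneg hℓ.le _
    have hmR : (m : ℝ) + 1 ≤ (b - a) / (d - c) + 2 := by
      have h := Nat.ceil_lt_add_one (show (0:ℝ) ≤ (b - a) / (d - c) by positivity)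
      rw [← hm_def] at h
      linarith
    have h1 : ((m : ℝ) + 1) * (d - c) ≤ 5 * (b - a) := by
      have h2 := mul_le_mul_of_nonneg_right hmR hℓ.le
      have h3 : (b - a) / (d - c) * (d - c) = b - a := div_mul_cancel₀ _ hℓ.ne'
      nlinarith [h2, h3, hd2]
    have hreal : C₁ * (d - c) ^ δ₁ * (((m : ℝ) + 1) * (C₂ * (d - c) ^ δ₂)) ≤
        (5 * C₁ * C₂ * (b - a) + 1) * (d - c) ^ (δ₁ + δ₂ - 1) := by
      have hL : C₁ * (d - c) ^ δ₁ * (((m : ℝ) + 1) * (C₂ * (d - c) ^ δ₂)) =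
          (C₁ * C₂) * (((m : ℝ) + 1) * (d - c)) * (d - c) ^ (δ₁ + δ₂ - 1) := by
        calc C₁ * (d - c) ^ δ₁ * (((m : ℝ) + 1) * (C₂ * (d - c) ^ δ₂))
            = (C₁ * C₂ * ((m : ℝ) + 1)) * ((d - c) ^ δ₁ * (d - c) ^ δ₂) := by ring
          _ = (C₁ * C₂ * ((m : ℝ) + 1)) * ((d - c) ^ (δ₁ + δ₂ - 1) * (d - c)) := by
              rw [hP]
          _ = _ := by ring
      rw [hL]
      refine mul_le_mul_of_nonneg_right ?_ hPnn
      have h4 : (C₁ * C₂) * (((m : ℝ) + 1) * (d - c)) ≤ (C₁ * C₂) * (5 * (b - a)) :=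
        mul_le_mul_of_nonneg_left h1 (mul_pos hC₁ hC₂).le
      have h5 : (C₁ * C₂) * (5 * (b - a)) = 5 * C₁ * C₂ * (b - a) := by ring
      linarith
    calc (ν.prod μ).map (fun p : ℝ × ℝ => p.1 + p.2) (Set.Icc c d)
        ≤ ENNReal.ofReal (C₁ * (d - c) ^ δ₁) * ν (Set.Icc (c - b) (d - a)) := key
      _ ≤ ENNReal.ofReal (C₁ * (d - c) ^ δ₁) * ((m + 1 : ℕ) * B) :=
          mul_le_mul_right hν2 _
      _ = ENNReal.ofReal ((C₁ * (d - c) ^ δ₁) *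
          (((m : ℝ) + 1) * (C₂ * (d - c) ^ δ₂))) := by
          rw [hB_def, ← ENNReal.ofReal_natCast (m + 1),
            ← ENNReal.ofReal_mul (by positivity), ← ENNReal.ofReal_mul (by positivity)]
          push_cast
          ring_nf
      _ ≤ _ := ENNReal.ofReal_le_ofReal hreal
end
end
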